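/- arXiv:1203.2392 — 12 statements merged into one kernel-verified Lean document; each statement's English description precedes it below -/
import Mathlib

section
/- For all ρ ∈ [0,1] and θ ∈ [0, π/4], the quantity f(ρ,θ) := (2 sin²θ − 1) ρ² − (4 sin²θ − √2 (sin θ + cos θ)) ρ − 2√2 cos θ + 2 is ≤ 0, with equality when θ = π/4. -/
open Real

theorem sqrt2_aux (r u v : ℝ) (hr2 : r ^ 2 = 2) (hr : 0 < r) (hu0 : 0 ≤ u)
    (hu1 : u ≤ 1) (hv0 : 0 < v) (hv2 : v ^ 2 = 2 - u ^ 2) :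
    -4 * u ^ 4 + 6 * u ^ 2 + 8 ≤ 4 * r * v * (1 + u ^ 2) := by
  have hkey : (4 * r * v * (1 + u ^ 2)) ^ 2 - (-4 * u ^ 4 + 6 * u ^ 2 + 8) ^ 2
      = 4 * u ^ 4 * (-4 * u ^ 4 + 4 * u ^ 2 + 7) := by
    linear_combination (16 * v^2 * (1 + u^2)^2) * hr2 + (32 * (1 + u^2)^2) * hv2
  have hQ : (0:ℝ) ≤ -4 * u ^ 4 + 4 * u ^ 2 + 7 := by
    nlinarith [sq_nonneg (u^2 - 1), sq_nonneg u]
  have hPpos : (0:ℝ) < -4 * u ^ 4 + 6 * u ^ 2 + 8 := by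
    nlinarith [sq_nonneg u, sq_nonneg (u^2), sq_nonneg (u^2 - 1)]
  have hTpos : (0:ℝ) < 4 * r * v * (1 + u ^ 2) := by positivity
  nlinarith [hkey, hPpos, hTpos, mul_nonneg (pow_nonneg hu0 4) hQ]

set_option maxHeartbeats 1000000 in
/-- For all ρ ∈ [0,1] and θ ∈ [0, π/4],
f(ρ,θ) = (2 sin²θ − 1)ρ² − (4 sin²θ − √2(sin θ + cos θ))ρ − 2√2 cos θ + 2 ≤ 0,
with equality when θ = π/4. -/
theorem stmt1 (ρ θ : ℝ) (hρ : ρ ∈ Set.Icc (0:ℝ) 1) (hθ : θ ∈ Set.Icc (0:ℝ) (π/4)) :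
    (2 * sin θ ^ 2 - 1) * ρ ^ 2
      - (4 * sin θ ^ 2 - Real.sqrt 2 * (sin θ + cos θ)) * ρ
      - 2 * Real.sqrt 2 * cos θ + 2 ≤ 0
    ∧ (θ = π/4 →
      (2 * sin θ ^ 2 - 1) * ρ ^ 2
        - (4 * sin θ ^ 2 - Real.sqrt 2 * (sin θ + cos θ)) * ρ
        - 2 * Real.sqrt 2 * cos θ + 2 = 0) := by
  obtain ⟨hρ0, hρ1⟩ := hρ
  obtain ⟨hθ0, hθ1⟩ := hθ
  have hr2 : Real.sqrt 2 ^ 2 = 2 := Real.sq_sqrt (by norm_num)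
  have hrpos : (0:ℝ) < Real.sqrt 2 := Real.sqrt_pos.mpr (by norm_num)
  have heq : θ = π/4 →
      (2 * sin θ ^ 2 - 1) * ρ ^ 2
        - (4 * sin θ ^ 2 - Real.sqrt 2 * (sin θ + cos θ)) * ρ
        - 2 * Real.sqrt 2 * cos θ + 2 = 0 := by
    intro h
    rw [h, Real.sin_pi_div_four, Real.cos_pi_div_four]
    linear_combination (ρ^2/2 - 1) * hr2
  refine ⟨?_, heq⟩
  have hpi2 : π/4 ≤ π/2 := by linarith [pi_pos]
  have hs0 : 0 ≤ sin θ := Real.sin_nonneg_of_nonneg_of_le_pi hθ0 (by nlinarith [pi_gt_three])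
  have hpyth : sin θ ^ 2 + cos θ ^ 2 = 1 := sin_sq_add_cos_sq θ
  have hsle : sin θ ≤ Real.sqrt 2 / 2 := by
    have := Real.sin_le_sin_of_le_of_le_pi_div_two
      (by linarith [pi_pos] : -(π/2) ≤ θ) hpi2 hθ1
    rwa [Real.sin_pi_div_four] at this
  have hcge : Real.sqrt 2 / 2 ≤ cos θ := by
    have := Real.cos_le_cos_of_nonneg_of_le_pi hθ0 (by nlinarith [pi_gt_three]) hθ1
    rwa [Real.cos_pi_div_four] at this
  have hcle : cos θ ≤ 1 := Real.cos_le_one θ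
  set s := sin θ with hsdef
  set c := cos θ with hcdef
  set r := Real.sqrt 2 with hrdef
  set u := c - s with hudef
  set v := c + s with hvdef
  clear_value u v
  clear_value s c r
  clear hθ0 hθ1 hpi2
  have hu0 : 0 ≤ u := by simp only [hudef]; linarith
  have hu1 : u ≤ 1 := by simp only [hudef]; linarith
  have huv : u ^ 2 + v ^ 2 = 2 := by simp only [hudef, hvdef]; nlinarith
  have hv0 : 0 < v := by simp only [hvdef]; nlinarith
  have hv2 : v ^ 2 = 2 - u ^ 2 := by linarith
  have hmain : -4 * u ^ 4 + 6 * u ^ 2 + 8 ≤ 4 * r * v * (1 + u ^ 2) :=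
    sqrt2_aux r u v hr2 hrpos hu0 hu1 hv0 hv2
  have hD : (4 * s ^ 2 - r * v) ^ 2 - 4 * (2 * s ^ 2 - 1) * (2 - 2 * r * c) ≤ 0 := by
    have hid : (4 * s ^ 2 - r * v) ^ 2 - 4 * (2 * s ^ 2 - 1) * (2 - 2 * r * c)
        = -4 * u ^ 4 + 6 * u ^ 2 + 8 - 4 * r * v * (1 + u ^ 2) := by
      simp only [hudef, hvdef]
      linear_combination (c^2 + 2*s*c + s^2) * hr2
        + (4*r*c + 4*c^2 - 4*r*s - 16*s*c + 20*s^2) * hpyth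
    rw [hid]; linarith
  rcases eq_or_lt_of_le (by nlinarith : 2 * s ^ 2 - 1 ≤ 0) with hA | hA
  · -- A = 0 case: s = c = r/2, everything vanishes
    have hs : s = r / 2 := by nlinarith
    have hc : c = r / 2 := by nlinarith
    rw [hs, hc]
    linear_combination (ρ^2/2 - 1) * hr2
  · have hid2 : 4 * (2 * s ^ 2 - 1) *
        ((2 * s ^ 2 - 1) * ρ ^ 2 - (4 * s ^ 2 - r * (s + c)) * ρ - 2 * r * c + 2)
        = (2 * (2 * s ^ 2 - 1) * ρ - (4 * s ^ 2 - r * v)) ^ 2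
          - ((4 * s ^ 2 - r * v) ^ 2 - 4 * (2 * s ^ 2 - 1) * (2 - 2 * r * c)) := by
      rw [hvdef]; ring
    have h1 : 0 ≤ 4 * (2 * s ^ 2 - 1) *
        ((2 * s ^ 2 - 1) * ρ ^ 2 - (4 * s ^ 2 - r * (s + c)) * ρ - 2 * r * c + 2) := by
      rw [hid2]
      have := sq_nonneg (2 * (2 * s ^ 2 - 1) * ρ - (4 * s ^ 2 - r * v))
      linarith
    by_contra hF
    push_neg at hF
    have h2 := mul_pos (show (0:ℝ) < 1 - 2 * s ^ 2 by linarith) hF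
    linarith
end

section
/- Let α = 1/√2 and define the Douglas–Rachford map T(x,y) = (x/ρ, α + (1 − 1/ρ) y) where ρ = √(x² + y²). If (x,y) satisfies 0 < y ≤ x and x² + y² ≤ 1 (i.e. (x,y) ∈ P₁), then |T(x,y) − (α,α)|² ≤ (1/2) |(x,y) − (α,α)|². -/
/-- In region P₁ = {0 < y ≤ x, x²+y² ≤ 1}, one DR step halves the squared
distance to (α,α), where α = 1/√2. -/
theorem stmt2 (x y : ℝ) (hy : 0 < y) (hyx : y ≤ x) (hρ : x ^ 2 + y ^ 2 ≤ 1) :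
    let α : ℝ := 1 / Real.sqrt 2
    let ρ : ℝ := Real.sqrt (x ^ 2 + y ^ 2)
    let x₁ : ℝ := x / ρ
    let y₁ : ℝ := α + (1 - 1 / ρ) * y
    (x₁ - α) ^ 2 + (y₁ - α) ^ 2 ≤ (1 / 2) * ((x - α) ^ 2 + (y - α) ^ 2) := by
  intro α ρ x₁ y₁
  have hx : 0 < x := lt_of_lt_of_le hy hyx
  have hsum : (0:ℝ) < x ^ 2 + y ^ 2 := by positivity
  have hs0 : 0 < ρ := Real.sqrt_pos.mpr hsum
  have hs2 : ρ ^ 2 = x ^ 2 + y ^ 2 := Real.sq_sqrt hsum.le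
  have hs1 : ρ ≤ 1 := by
    rw [show (1:ℝ) = Real.sqrt 1 by simp]
    exact Real.sqrt_le_sqrt hρ
  have ha0 : 0 < α := by positivity
  have ha2 : α ^ 2 = 1 / 2 := by
    have h2 : Real.sqrt 2 ^ 2 = 2 := Real.sq_sqrt (by norm_num)
    show (1 / Real.sqrt 2) ^ 2 = 1 / 2
    rw [div_pow, h2, one_pow]
  have hyas : y ≤ α * ρ := by
    nlinarith [mul_pos ha0 hs0, mul_nonneg (sub_nonneg.2 hyx) (by positivity : (0:ℝ) ≤ x + y),
      (by positivity : (0:ℝ) < α * ρ + y)]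
  have hxas : α * ρ ≤ x := by
    nlinarith [mul_pos ha0 hs0, mul_nonneg (sub_nonneg.2 hyx) (by positivity : (0:ℝ) ≤ x + y),
      (by positivity : (0:ℝ) < α * ρ + x)]
  have hvu : x + y ≤ 2 * (α * ρ) := by
    nlinarith [sq_nonneg (x - y), mul_pos ha0 hs0,
      (by positivity : (0:ℝ) < 2 * (α * ρ) + (x + y))]
  -- abbreviations
  set u : ℝ := x - α * ρ with hu
  set v : ℝ := α * ρ - y with hv
  have hu0 : 0 ≤ u := sub_nonneg.2 hxas
  have hv0 : 0 ≤ v := sub_nonneg.2 hyas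
  have hvu0 : 0 ≤ v - u := by simp only [hu, hv]; linarith
  -- the main nonnegative quantity
  have hE : 0 ≤ v ^ 2 - u ^ 2 + 4 * α * u * (1 - ρ) ^ 2 - 2 * (1 - ρ) * u ^ 2 := by
    have hiden : (v ^ 2 - u ^ 2 + 4 * α * u * (1 - ρ) ^ 2 - 2 * (1 - ρ) * u ^ 2) * (2 * (α * ρ))
        = (u ^ 2 + v ^ 2) * (v - u) + 2 * u * v ^ 2
          + 2 * u * (u - α * ρ * (1 - ρ)) ^ 2 + u * ρ * (1 - ρ) ^ 2 * (4 - ρ) := by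
      simp only [hu, hv]
      linear_combination (x - y) * hs2
        + (-8 * ρ ^ 2 * α + 18 * ρ ^ 3 * α - 12 * ρ ^ 4 * α + 2 * ρ ^ 5 * α
           - 2 * y * ρ ^ 2 + 8 * x * ρ - 16 * x * ρ ^ 2 + 12 * x * ρ ^ 3 - 2 * x * ρ ^ 4) * ha2
    have hrhs : 0 ≤ (u ^ 2 + v ^ 2) * (v - u) + 2 * u * v ^ 2
        + 2 * u * (u - α * ρ * (1 - ρ)) ^ 2 + u * ρ * (1 - ρ) ^ 2 * (4 - ρ) := by
      have t1 : 0 ≤ (u ^ 2 + v ^ 2) * (v - u) := mul_nonneg (by positivity) hvu0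
      have t2 : 0 ≤ 2 * u * v ^ 2 := by positivity
      have t3 : 0 ≤ 2 * u * (u - α * ρ * (1 - ρ)) ^ 2 := by positivity
      have t4 : 0 ≤ u * ρ * (1 - ρ) ^ 2 * (4 - ρ) := by
        have : (0:ℝ) ≤ 4 - ρ := by linarith
        positivity
      linarith
    have hpos : (0:ℝ) < 2 * (α * ρ) := by positivity
    have h5 : 0 ≤ (v ^ 2 - u ^ 2 + 4 * α * u * (1 - ρ) ^ 2 - 2 * (1 - ρ) * u ^ 2)
        * (2 * (α * ρ)) := hiden ▸ hrhs
    exact nonneg_of_mul_nonneg_right (by linear_combination h5) hpos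
  -- key inequality in cleared form
  have key : (x - α * ρ) ^ 2 + ((ρ - 1) * y) ^ 2
      ≤ 1 / 2 * ((x - α) ^ 2 + (y - α) ^ 2) * ρ ^ 2 := by
    have hiden2 : (x - α * ρ) ^ 2 + ((ρ - 1) * y) ^ 2
        - 1 / 2 * ((x - α) ^ 2 + (y - α) ^ 2) * ρ ^ 2
        = -(ρ / 2) * (v ^ 2 - u ^ 2 + 4 * α * u * (1 - ρ) ^ 2 - 2 * (1 - ρ) * u ^ 2) := by
      simp only [hu, hv]
      linear_combination (-1 + 3 / 2 * ρ - 1 / 2 * ρ ^ 2) * hs2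
        + (-2 * ρ ^ 2 + 3 * ρ ^ 3 - ρ ^ 4) * ha2
    have h6 : 0 ≤ ρ / 2 * (v ^ 2 - u ^ 2 + 4 * α * u * (1 - ρ) ^ 2 - 2 * (1 - ρ) * u ^ 2) :=
      mul_nonneg (by positivity) hE
    linarith [hiden2, h6]
  show (x / ρ - α) ^ 2 + (α + (1 - 1 / ρ) * y - α) ^ 2 ≤
    (1 / 2) * ((x - α) ^ 2 + (y - α) ^ 2)
  have e1 : x / ρ - α = (x - α * ρ) / ρ := by field_simp
  have e2 : α + (1 - 1 / ρ) * y - α = ((ρ - 1) * y) / ρ := by field_simp; ring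
  rw [e1, e2, div_pow, div_pow, ← add_div, div_le_iff₀ (by positivity)]
  calc (x - α * ρ) ^ 2 + ((ρ - 1) * y) ^ 2
      ≤ 1 / 2 * ((x - α) ^ 2 + (y - α) ^ 2) * ρ ^ 2 := key
    _ = 1 / 2 * ((x - α) ^ 2 + (y - α) ^ 2) * ρ ^ 2 := rfl
end

section
/- Let α = 1/√2 and T(x,y) = (x/ρ, α + (1 − 1/ρ) y), ρ = √(x²+y²). If x² + y² > 1 and 0 < y ≤ α (region P₂), then T(x,y) satisfies x₁² + y₁² > 1 and y₁ > α, where (x₁,y₁) = T(x,y); i.e. T(x,y) lies in P₃ ∪ P₄. -/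
/-- If (x,y) ∈ P₂ = {x²+y² > 1, 0 < y ≤ α}, then T(x,y) = (x₁,y₁) satisfies
x₁² + y₁² > 1 and y₁ > α, i.e. T(x,y) ∈ P₃ ∪ P₄. -/
theorem stmt4 (x y : ℝ) (hρ : 1 < x ^ 2 + y ^ 2) (hy : 0 < y)
    (hyα : y ≤ 1 / Real.sqrt 2) :
    let α : ℝ := 1 / Real.sqrt 2
    let ρ : ℝ := Real.sqrt (x ^ 2 + y ^ 2)
    let x₁ : ℝ := x / ρ
    let y₁ : ℝ := α + (1 - 1 / ρ) * y
    x₁ ^ 2 + y₁ ^ 2 > 1 ∧ y₁ > α := by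
  intro α ρ x₁ y₁
  have hs : ρ ^ 2 = x ^ 2 + y ^ 2 := Real.sq_sqrt (by positivity)
  have hρ0 : 0 < ρ := Real.sqrt_pos.mpr (by positivity)
  have hρ1 : 1 < ρ := by nlinarith
  have hα : 0 < α := by positivity
  have hy1 : y₁ > α := by
    have h : 0 < (1 - 1 / ρ) * y := by
      apply mul_pos _ hy
      rw [sub_pos]
      exact (div_lt_one hρ0).mpr hρ1
    show α + (1 - 1 / ρ) * y > α
    linarith
  refine ⟨?_, hy1⟩
  have key : y₁ * ρ > y := by
    have h1 : y₁ * ρ = α * ρ + (ρ - 1) * y := by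
      show (α + (1 - 1 / ρ) * y) * ρ = _
      field_simp
    rw [h1]
    nlinarith [mul_nonneg (le_of_lt (sub_pos.mpr hρ1)) (sub_nonneg.mpr hyα)]
  have hx1 : x₁ ^ 2 = x ^ 2 / ρ ^ 2 := by
    show (x / ρ) ^ 2 = _
    rw [div_pow]
  rw [gt_iff_lt, hx1, div_add' _ _ _ (by positivity), lt_div_iff₀ (by positivity)]
  have hy1pos : 0 < y₁ := lt_trans hα hy1
  nlinarith [key, hy1pos, mul_pos hy1pos hρ0, sq_nonneg (y₁ * ρ - y)]
end

section
/- Let α = 1/√2 and T(x,y) = (x/ρ, α + (1 − 1/ρ) y), ρ = √(x²+y²). If α < y ≤ x (region P₃), then (x₁,y₁) = T(x,y) satisfies x₁² + y₁² > 1, x₁ > 0, and x₁ < y₁; i.e. T(x,y) ∈ P₄. -/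
/-- If (x,y) ∈ P₃ = {α < y ≤ x}, then T(x,y) = (x₁,y₁) satisfies
x₁² + y₁² > 1, x₁ > 0 and x₁ < y₁, i.e. T(x,y) ∈ P₄. -/
theorem stmt5 (x y : ℝ) (hαy : 1 / Real.sqrt 2 < y) (hyx : y ≤ x) :
    let α : ℝ := 1 / Real.sqrt 2
    let ρ : ℝ := Real.sqrt (x ^ 2 + y ^ 2)
    let x₁ : ℝ := x / ρ
    let y₁ : ℝ := α + (1 - 1 / ρ) * y
    x₁ ^ 2 + y₁ ^ 2 > 1 ∧ 0 < x₁ ∧ x₁ < y₁ := by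
  have hs2 : (0:ℝ) < Real.sqrt 2 := Real.sqrt_pos.2 (by norm_num)
  have hs2sq : Real.sqrt 2 ^ 2 = 2 := Real.sq_sqrt (by norm_num)
  set α : ℝ := 1 / Real.sqrt 2 with hαdef
  set ρ : ℝ := Real.sqrt (x ^ 2 + y ^ 2) with hρdef
  have hα : 0 < α := by positivity
  have hy : 0 < y := lt_trans hα hαy
  have hx : 0 < x := lt_of_lt_of_le hy hyx
  have hρpos : 0 < ρ := Real.sqrt_pos.2 (by positivity)
  have hρsq : ρ ^ 2 = x ^ 2 + y ^ 2 := Real.sq_sqrt (by positivity)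
  have hρρ : (1 / ρ) * y * ρ = y := by field_simp
  have hρy : Real.sqrt 2 * y ≤ ρ := by
    have h : Real.sqrt 2 * y = Real.sqrt (2 * y ^ 2) := by
      rw [Real.sqrt_mul (by norm_num), Real.sqrt_sq hy.le]
    rw [h, hρdef]
    exact Real.sqrt_le_sqrt (by nlinarith)
  have hxy : x + y ≤ Real.sqrt 2 * ρ := by
    have h := Real.sqrt_le_sqrt (show (x + y) ^ 2 ≤ 2 * (x ^ 2 + y ^ 2) by nlinarith)
    rwa [Real.sqrt_sq (by positivity), Real.sqrt_mul (by norm_num), ← hρdef] at h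
  have hαy2 : Real.sqrt 2 < α + y := by
    rw [hαdef]
    nlinarith [mul_one_div_cancel hs2.ne', mul_lt_mul_of_pos_left hαy hs2]
  have h1 : Real.sqrt 2 * ρ < (α + y) * ρ := by nlinarith
  have h2y : 2 * y ≤ Real.sqrt 2 * ρ := by
    nlinarith [mul_le_mul_of_nonneg_left hρy hs2.le]
  have hx1 : 0 < x / ρ := div_pos hx hρpos
  have hx1y1 : x / ρ < α + (1 - 1 / ρ) * y := by
    rw [div_lt_iff₀ hρpos]
    nlinarith [hρρ, hxy, h1]
  refine ⟨?_, hx1, hx1y1⟩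
  have hyρ : y / ρ < α + (1 - 1 / ρ) * y := by
    rw [div_lt_iff₀ hρpos]
    nlinarith [hρρ, h2y, h1]
  have hyρ0 : 0 ≤ y / ρ := div_nonneg hy.le hρpos.le
  have hy1sq : (y / ρ) ^ 2 < (α + (1 - 1 / ρ) * y) ^ 2 := by nlinarith
  have key : (x / ρ) ^ 2 + (y / ρ) ^ 2 = 1 := by
    field_simp
    linarith
  show (x / ρ) ^ 2 + (α + (1 - 1 / ρ) * y) ^ 2 > 1
  linarith
end

section
/- Let α = 1/√2 and T(x,y) = (x/ρ, α + (1 − 1/ρ) y), ρ = √(x²+y²). If (x,y) ∈ P₄, i.e. x² + y² > 1 and 0 < x < y, then (x₁,y₁) = T(x,y) satisfies y₁ > α and x₁ < y₁. -/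
/-- If (x,y) ∈ P₄ = {x²+y² > 1, 0 < x < y}, then T(x,y) = (x₁,y₁) satisfies
y₁ > α and x₁ < y₁. -/
theorem stmt6 (x y : ℝ) (hρ : 1 < x ^ 2 + y ^ 2) (hx : 0 < x) (hxy : x < y) :
    let α : ℝ := 1 / Real.sqrt 2
    let ρ : ℝ := Real.sqrt (x ^ 2 + y ^ 2)
    let x₁ : ℝ := x / ρ
    let y₁ : ℝ := α + (1 - 1 / ρ) * y
    y₁ > α ∧ x₁ < y₁ := by
  intro α ρ x₁ y₁
  have hsq : ρ ^ 2 = x ^ 2 + y ^ 2 := Real.sq_sqrt (by positivity)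
  have hρ0 : 0 ≤ ρ := Real.sqrt_nonneg _
  have hρ1 : 1 < ρ := by nlinarith
  have hy : 0 < y := hx.trans hxy
  have hs2 : (0:ℝ) < Real.sqrt 2 := by positivity
  have hy1 : y₁ > α := by
    have h1 : 1 / ρ < 1 := by
      rw [div_lt_one (by linarith)]; exact hρ1
    have : 0 < (1 - 1 / ρ) * y := by
      apply mul_pos (by linarith) hy
    simp only [y₁]; linarith
  refine ⟨hy1, lt_trans ?_ hy1⟩
  -- x / ρ < α since 2 x² < ρ²
  have h2 : Real.sqrt 2 * x < ρ := by
    nlinarith [Real.sq_sqrt (show (0:ℝ) ≤ 2 by norm_num), mul_pos hs2 hx]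
  rw [div_lt_div_iff₀ (by linarith) hs2]
  linarith [mul_comm (Real.sqrt 2) x]
end

section
/- Let ε = (1 − 2^{−1/3})^{3/2} and α = 1/√2. The function g(θ) = α + ε tan θ − sin θ is nonnegative for all θ ∈ (π/4, π/2), and attains its minimum value 0 at θ = arcsin(2^{−1/6}). -/
open Real

set_option maxHeartbeats 1000000

/-- With ε = (1 − 2^{−1/3})^{3/2} and α = 1/√2, the function
g(θ) = α + ε tan θ − sin θ is nonnegative on (π/4, π/2) and vanishes at
θ = arcsin(2^{−1/6}). -/
theorem stmt8 :
    let ε : ℝ := (1 - 2 ^ (-(1:ℝ)/3)) ^ ((3:ℝ)/2)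
    let α : ℝ := 1 / Real.sqrt 2
    let g : ℝ → ℝ := fun θ => α + ε * tan θ - sin θ
    (∀ θ ∈ Set.Ioo (π/4) (π/2), 0 ≤ g θ) ∧
    g (arcsin (2 ^ (-(1:ℝ)/6))) = 0 := by
  intro ε α g
  set a : ℝ := (2:ℝ) ^ (-(1:ℝ)/3) with ha_def
  have ha_pos : 0 < a := Real.rpow_pos_of_pos (by norm_num) _
  have ha_lt1 : a < 1 := by
    have := Real.rpow_lt_one_of_one_lt_of_neg (x := (2:ℝ)) (z := -(1:ℝ)/3)
      (by norm_num) (by norm_num)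
    simpa [ha_def] using this
  have ha3 : a ^ 3 = 1/2 := by
    rw [ha_def, ← Real.rpow_natCast ((2:ℝ) ^ (-(1:ℝ)/3)) 3, ← Real.rpow_mul (by norm_num),
      show (-(1:ℝ)/3 * (3:ℕ)) = -1 by push_cast; ring, Real.rpow_neg_one]
    norm_num
  set k : ℝ := Real.sqrt (1 - a) with hk_def
  have hk_pos : 0 < k := Real.sqrt_pos.mpr (by linarith)
  have hk2 : k ^ 2 = 1 - a := Real.sq_sqrt (by linarith)
  have hε : ε = k ^ 3 := by
    show (1 - a) ^ ((3:ℝ)/2) = k ^ 3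
    rw [show ((3:ℝ)/2) = (1/2) * 3 by norm_num,
      Real.rpow_mul (by linarith : (0:ℝ) ≤ 1 - a), ← Real.sqrt_eq_rpow,
      show ((3:ℝ)) = ((3:ℕ):ℝ) by norm_num, Real.rpow_natCast]
  set x : ℝ := 1 / Real.sqrt 2 with hx_def
  have hx_pos : 0 < x := by positivity
  have hx2 : x ^ 2 = 1/2 := by
    rw [hx_def, div_pow, one_pow, Real.sq_sqrt (by norm_num : (0:ℝ) ≤ 2)]
  -- bounds on a from a^3 = 1/2
  have ha_gt : (7:ℝ)/10 < a := by
    nlinarith [ha3, ha_pos, sq_nonneg (a - 7/10), sq_nonneg (a + 7/10), mul_pos ha_pos ha_pos]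
  have ha_lt : a < (4:ℝ)/5 := by
    nlinarith [ha3, ha_pos, sq_nonneg (a - 4/5), sq_nonneg (a + 4/5), mul_pos ha_pos ha_pos]
  constructor
  · intro θ hθ
    obtain ⟨h1, h2⟩ := hθ
    have hpi4 : (0:ℝ) < π/4 := by positivity
    have hc_pos : 0 < cos θ := Real.cos_pos_of_mem_Ioo
      ⟨by linarith [pi_pos], by linarith⟩
    have hs_pos : 0 < sin θ := Real.sin_pos_of_pos_of_lt_pi (by linarith)
      (by linarith [pi_pos])
    set c : ℝ := cos θ
    set s : ℝ := sin θ
    have hsc : s ^ 2 = 1 - c ^ 2 := by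
      have := sin_sq_add_cos_sq θ
      nlinarith [this]
    have hc1 : c < 1 := by
      nlinarith [hsc, hs_pos]
    have htan : tan θ = s / c := Real.tan_eq_sin_div_cos θ
    -- the key polynomial inequality
    have hM_pos : 0 < 2*a - 1 + k*c := by nlinarith [mul_pos hk_pos hc_pos]
    have hquad_pos : 0 < k^4*c^2 + 2*a*k^3*c + (1/2 - (2*a-1)^2) := by
      have h1 : 0 ≤ k^4*c^2 := by positivity
      have h2 : 0 ≤ 2*a*k^3*c := by positivity
      nlinarith
    have key : k^2 * (1/2 - (1 - c^2) * (2*a - 1 + k*c)^2)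
        = (c - k)^2 * (k^4*c^2 + 2*a*k^3*c + (1/2 - (2*a-1)^2)) := by
      linear_combination ((-1)*c^2 + 2*k*c + (-2)*k^2*c^2 + 2*k^3*c^3 + (-1)*k^4*c^2
        + 3*a*c^2 + (-6)*a*k*c + 5*a*k^2*c^2 + (-2)*a*k^3*c + (-1)*a^2*c^2
        + 2*a^2*k*c) * hk2 + (c^2 - 2*k*c) * ha3
    have hp : 0 ≤ 1/2 - (1 - c^2) * (2*a - 1 + k*c)^2 := by
      have hrhs : 0 ≤ (c - k)^2 * (k^4*c^2 + 2*a*k^3*c + (1/2 - (2*a-1)^2)) :=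
        mul_nonneg (sq_nonneg _) hquad_pos.le
      rw [← key] at hrhs
      have hk2pos : 0 < k ^ 2 := by positivity
      nlinarith [hrhs, hk2pos]
    have h2' : 0 ≤ x - s * (2*a - 1 + k*c) := by
      have hsum : 0 < x + s * (2*a - 1 + k*c) := by positivity
      have hprod : 0 ≤ (x - s * (2*a - 1 + k*c)) * (x + s * (2*a - 1 + k*c)) := by
        nlinarith [hp, hx2, hsc]
      exact (mul_nonneg_iff_of_pos_right hsum).mp hprod
    have hnum : 0 ≤ c * x + k^3 * s - s * c := by
      have hid : c * x + k^3 * s - s * c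
          = c * (x - s * (2*a - 1 + k*c)) + s * k * (c - k)^2 := by
        linear_combination (2*c*s) * hk2
      rw [hid]
      have := mul_nonneg hc_pos.le h2'
      have := mul_nonneg (mul_nonneg hs_pos.le hk_pos.le) (sq_nonneg (c - k))
      linarith
    show 0 ≤ x + ε * tan θ - s
    rw [hε, htan]
    have : x + k^3 * (s / c) - s = (c * x + k^3 * s - s * c) / c := by
      field_simp
    rw [this]
    exact div_nonneg hnum hc_pos.le
  · -- equality case
    set s0 : ℝ := (2:ℝ) ^ (-(1:ℝ)/6) with hs0_def
    have hs0_pos : 0 < s0 := Real.rpow_pos_of_pos (by norm_num) _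
    have hs0_lt1 : s0 < 1 := by
      have := Real.rpow_lt_one_of_one_lt_of_neg (x := (2:ℝ)) (by norm_num)
        (z := -(1:ℝ)/6) (by norm_num)
      simpa [hs0_def] using this
    have hs0sq : s0 ^ 2 = a := by
      rw [hs0_def, ha_def, ← Real.rpow_natCast ((2:ℝ) ^ (-(1:ℝ)/6)) 2,
        ← Real.rpow_mul (by norm_num)]
      norm_num
    have hsin : sin (arcsin s0) = s0 :=
      Real.sin_arcsin (by linarith) (by linarith)
    have htan : tan (arcsin s0) = s0 / Real.sqrt (1 - s0 ^ 2) :=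
      Real.tan_arcsin s0
    have hsqrt : Real.sqrt (1 - s0 ^ 2) = k := by rw [hs0sq]
    show x + ε * tan (arcsin s0) - sin (arcsin s0) = 0
    rw [hε, htan, hsin, hsqrt]
    have hprod : a * s0 = x := by
      rw [ha_def, hs0_def, hx_def, ← Real.rpow_add (by norm_num : (0:ℝ) < 2)]
      rw [show (-(1:ℝ)/3 + -(1:ℝ)/6) = -(1/2) by norm_num,
        Real.rpow_neg (by norm_num : (0:ℝ) ≤ 2), Real.sqrt_eq_rpow]
      exact (one_div _).symm
    have : k^3 * (s0 / k) = (1 - a) * s0 := by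
      field_simp
      linear_combination hk2
    rw [this]
    linarith [hprod]
end

section
/- Let α = 1/√2 and T(x,y) = (x/ρ, α + (1 − 1/ρ) y), ρ = √(x²+y²). If (x,y) ∈ P₆, i.e. 0 < x < y ≤ α, and additionally x ≥ ε := (1 − 2^{−1/3})^{3/2}, then (x₁,y₁) = T(x,y) satisfies x < x₁ < α and 0 ≤ y₁ < y. -/
lemma stmt9_aux (t y : ℝ) (ht0 : 0 < t) (ht1 : t < 1) (hy : 0 < y) :
    y ^ 2 ≤ ((1 - t ^ 2) ^ 3 + y ^ 2) * (t ^ 3 + y) ^ 2 := by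
  have hq : 0 < (y + t) ^ 2 - (t - t ^ 3) ^ 2 - t ^ 4 := by
    have h46 : 0 < t ^ 4 * (1 - t ^ 2) := mul_pos (pow_pos ht0 4) (by nlinarith)
    nlinarith [mul_pos hy ht0, sq_nonneg y]
  nlinarith [mul_nonneg (sq_nonneg (t ^ 3 + y - t)) hq.le]

set_option maxHeartbeats 1000000 in
/-- If (x,y) ∈ P₆ = {0 < x < y ≤ α} and x ≥ ε = (1 − 2^{−1/3})^{3/2}, then
T(x,y) = (x₁,y₁) satisfies x < x₁ < α and 0 ≤ y₁ < y. -/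
theorem stmt9 (x y : ℝ) (hx : 0 < x) (hxy : x < y) (hyα : y ≤ 1 / Real.sqrt 2)
    (hε : ((1:ℝ) - 2 ^ (-(1:ℝ)/3)) ^ ((3:ℝ)/2) ≤ x) :
    let α : ℝ := 1 / Real.sqrt 2
    let ρ : ℝ := Real.sqrt (x ^ 2 + y ^ 2)
    let x₁ : ℝ := x / ρ
    let y₁ : ℝ := α + (1 - 1 / ρ) * y
    x < x₁ ∧ x₁ < α ∧ 0 ≤ y₁ ∧ y₁ < y := by
  intro α ρ x₁ y₁
  have hαdef : α = 1 / Real.sqrt 2 := rfl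
  have hρdef : ρ = Real.sqrt (x ^ 2 + y ^ 2) := rfl
  have hx₁ : x₁ = x / ρ := rfl
  have hy₁ : y₁ = α + (1 - 1 / ρ) * y := rfl
  clear_value α ρ x₁ y₁
  have hs0 : 0 < Real.sqrt 2 := Real.sqrt_pos.mpr (by norm_num)
  have hs2 : Real.sqrt 2 ^ 2 = 2 := Real.sq_sqrt (by norm_num)
  have hα0 : 0 < α := by rw [hαdef]; positivity
  have hα2 : α ^ 2 = 1/2 := by rw [hαdef, div_pow, one_pow, hs2]
  -- the key constant t = 2^(-1/6)
  obtain ⟨t, ht0, ht1, ht3, htc⟩ :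
      ∃ t : ℝ, 0 < t ∧ t < 1 ∧ t ^ 3 = α ∧ (2:ℝ) ^ (-(1:ℝ)/3) = t ^ 2 := by
    refine ⟨(2:ℝ) ^ (-(1:ℝ)/6), Real.rpow_pos_of_pos (by norm_num) _,
      Real.rpow_lt_one_of_one_lt_of_neg (by norm_num) (by norm_num), ?_, ?_⟩
    · rw [hαdef, ← Real.rpow_natCast ((2:ℝ) ^ (-(1:ℝ)/6)) 3,
        ← Real.rpow_mul (by norm_num)]
      have h : (-(1:ℝ)/6) * ((3:ℕ):ℝ) = -(1/2 : ℝ) := by push_cast; ring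
      rw [h, Real.rpow_neg (by norm_num), Real.sqrt_eq_rpow]
      norm_num
    · rw [← Real.rpow_natCast ((2:ℝ) ^ (-(1:ℝ)/6)) 2, ← Real.rpow_mul (by norm_num)]
      norm_num
  have htc1 : t ^ 2 < 1 := by nlinarith
  -- x^2 ≥ ε^2 = (1 - t^2)^3
  have hε0 : 0 ≤ ((1:ℝ) - 2 ^ (-(1:ℝ)/3)) ^ ((3:ℝ)/2) :=
    Real.rpow_nonneg (by rw [htc]; linarith) _
  have hε2 : (((1:ℝ) - 2 ^ (-(1:ℝ)/3)) ^ ((3:ℝ)/2)) ^ 2 = (1 - t ^ 2) ^ 3 := by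
    rw [htc, ← Real.rpow_natCast ((1 - t^2 : ℝ) ^ ((3:ℝ)/2)) 2,
      ← Real.rpow_mul (by linarith)]
    have h : ((3:ℝ)/2) * ((2:ℕ):ℝ) = ((3:ℕ) : ℝ) := by push_cast; ring
    rw [h, Real.rpow_natCast]
  have hx2 : (1 - t ^ 2) ^ 3 ≤ x ^ 2 := by
    rw [← hε2]; nlinarith [hε, hε0]
  clear hε hε0 hε2 htc
  -- facts about ρ
  have hρ2 : ρ ^ 2 = x ^ 2 + y ^ 2 := by rw [hρdef]; exact Real.sq_sqrt (by positivity)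
  have hρ0 : 0 < ρ := by rw [hρdef]; exact Real.sqrt_pos.mpr (by positivity)
  have hy2 : y ^ 2 ≤ 1/2 := by nlinarith [hyα, hα2, hα0, hαdef ▸ hyα]
  have hρ1 : ρ < 1 := by nlinarith [sq_nonneg (ρ - 1)]
  -- first: x < x/ρ
  have g1 : x < x₁ := by
    rw [hx₁, lt_div_iff₀ hρ0]
    nlinarith
  -- second: x/ρ < α
  have g2 : x₁ < α := by
    rw [hx₁, hαdef, div_lt_div_iff₀ hρ0 hs0]
    have h2 : (x * Real.sqrt 2) ^ 2 < ρ ^ 2 := by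
      rw [hρ2, mul_pow, hs2]; nlinarith
    nlinarith [mul_pos hx hs0]
  -- α*ρ < y
  have key : α * ρ < y := by
    have h2 : (α * ρ) ^ 2 < y ^ 2 := by
      rw [mul_pow, hα2, hρ2]; nlinarith
    nlinarith [mul_pos hα0 hρ0]
  -- fourth: y₁ < y
  have g4 : y₁ < y := by
    rw [hy₁]
    have e1 : α + (1 - 1 / ρ) * y = α + y - y / ρ := by ring
    have h2 : α < y / ρ := (lt_div_iff₀ hρ0).mpr (by linarith)
    rw [e1]; linarith
  -- third: 0 ≤ y₁
  have hsq : y ^ 2 ≤ (x ^ 2 + y ^ 2) * (α + y) ^ 2 := by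
    rw [← ht3]
    have h := stmt9_aux t y ht0 ht1 (hx.trans hxy)
    have hmul := mul_le_mul_of_nonneg_right
      (by linarith : (1 - t ^ 2) ^ 3 + y ^ 2 ≤ x ^ 2 + y ^ 2) (sq_nonneg (t ^ 3 + y))
    linarith
  have hαy0 : 0 < α + y := by linarith
  have hyle : y ≤ ρ * (α + y) := by
    have h2 : y ^ 2 ≤ (ρ * (α + y)) ^ 2 := by rw [mul_pow, hρ2]; linarith
    nlinarith [mul_pos hρ0 hαy0]
  have g3 : 0 ≤ y₁ := by
    rw [hy₁]
    have e1 : α + (1 - 1 / ρ) * y = α + y - y / ρ := by ring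
    have h2 : y / ρ ≤ α + y := (div_le_iff₀ hρ0).mpr (by linarith)
    rw [e1]; linarith
  exact ⟨g1, g2, g3, g4⟩
end

section
/- Let α = 1/√2, γ = 5/2 − √2 + (1/2)√(29 − 20√2), and T(x,y) = (x/ρ, α + (1 − 1/ρ) y), ρ = √(x²+y²). If (x,y) lies in P₅ ∪ P₆ (i.e. 0 < x, x²+y² ≤ 1, y > α, or 0 < x < y ≤ α), then |T(x,y) − (α,α)|² < γ |(x,y) − (α,α)|². -/
set_option maxHeartbeats 2000000

/-- numeric kernel for region P6 near the corner -/
lemma n6num (d z : ℝ) (hd : 0 < d) (hz : 0 ≤ z) (hz1 : z ≤ 0.158) (hdz : d + z ≤ 0.70711) :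
    0 < 4.03*(z^2+z*d) + 1.845*d^2 - 11.42*z^3 - 18.77*z^2*d - 13.65*z*d^2 - 3.385*d^3
      + 1.766*d^4 + 8.06*z^4 + 18.46*z^3*d + 17.96*z^2*d^2 + 8.31*d^3*z := by
  nlinarith [mul_pos hd hd, mul_nonneg hz hz, mul_nonneg (mul_nonneg hz hz) hz,
    mul_nonneg hz hd.le, mul_pos (mul_pos hd hd) hd, mul_nonneg (mul_nonneg hz hd.le) hd.le,
    mul_nonneg (mul_nonneg hz hz) hd.le, sq_nonneg (d - 0.5), sq_nonneg (z - 0.1),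
    mul_nonneg (mul_nonneg (mul_nonneg hz hd.le) hd.le) hd.le]

/-- numeric kernel for region P5 -/
lemma n5num (p v : ℝ) (hv : 0 < v) (hv1 : v ≤ 0.293) (hp : 0 ≤ p) (hp1 : p ≤ 0.70711) :
    0 < 1.845*(p^2+v^2) - 0.344*p*v - 1.628*p*v^2 - 0.423*p*v^3 - 3.385*p^3
      - 1.252*p^3*v + 1.766*p^4 := by
  nlinarith [mul_pos hv hv, mul_nonneg hp hp, mul_nonneg hp hv.le, sq_nonneg (p - v),
    mul_nonneg (mul_nonneg (sub_nonneg.2 hp1) hp) hp,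
    mul_nonneg (mul_nonneg (sub_nonneg.2 hp1) hp) hv.le,
    mul_nonneg (mul_nonneg (sub_nonneg.2 hv1) hp) hv.le,
    mul_nonneg (mul_nonneg (sub_nonneg.2 hv1) hv.le) hv.le,
    mul_nonneg (mul_nonneg (mul_nonneg (sub_nonneg.2 hp1) hp) hp) hp,
    mul_nonneg (mul_nonneg (mul_nonneg (sub_nonneg.2 hv1) hp) hp) hp,
    mul_nonneg (sub_nonneg.2 hp1) (sub_nonneg.2 hv1)]

/-- numeric kernel for region P6 away from the corner -/
lemma aanum (x y : ℝ) (hx : 0 ≤ x) (hxy : x ≤ y) (hy : 0 < y) (hy1 : y ≤ 0.55) :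
    0 < 1.76*x^3 + 1.24*x^2*y + 3.61*x*y^2 + 0.42*y^3 - 2.501*x^2 - 4.268*x*y
      - 4.379*y^2 + 1.181*x + 2.835*y := by
  nlinarith [mul_nonneg hx hx, mul_pos hy hy, mul_nonneg hx hy.le,
    mul_nonneg (mul_nonneg (sub_nonneg.2 hy1) hx) hx,
    mul_nonneg (mul_nonneg (sub_nonneg.2 hy1) hx) hy.le,
    mul_nonneg (mul_nonneg (sub_nonneg.2 hy1) hy.le) hy.le,
    mul_nonneg (mul_nonneg (sub_nonneg.2 hxy) hx) hy.le,
    mul_nonneg (mul_nonneg (sub_nonneg.2 hxy) hy.le) hy.le,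
    mul_nonneg (sub_nonneg.2 hxy) hy.le, sq_nonneg (x - y),
    mul_nonneg (sub_nonneg.2 hy1) (sub_nonneg.2 hxy)]

/-- P4 positivity on region P6, part a : y ≤ 0.55 -/
lemma p4p6a (x y s g : ℝ) (hs2 : s^2 = 2) (hs1 : 1.41421 < s) (hs1' : s < 1.41422)
    (hg : g^2 + 1 = (5 - 2*s)*g) (hg1 : 1.5087 < g) (hg2 : g < 1.5089)
    (hx : 0 < x) (hxy : x < y) (hy1 : y ≤ 0.55) :
    0 < (x^2 + y^2 + (y + (s-1)*x)^2) * (g*((x-s/2)^2+(y-s/2)^2) - 3/2 - y^2)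
        + 2*(y + (s-1)*x)*(s*x + 2*y^2) := by
  have hsg1 : s*g < 2.13392 := by
    nlinarith [mul_nonneg (sub_nonneg.2 hs1'.le) (sub_nonneg.2 hg1.le)]
  have hsg2 : 2.1336 < s*g := by
    nlinarith [mul_nonneg (sub_nonneg.2 hs1.le) (sub_nonneg.2 hg1.le)]
  -- q(y) ≥ 0 : discriminant-zero quadratic
  have hqid : 4*(g-1)*((g-1)*y^2 - (g*s-2)*y + (g-3/2)) = (2*(g-1)*y - (g*s-2))^2 := by
    linear_combination 2*hg - g^2*hs2
  have hq : 0 ≤ (g-1)*y^2 - (g*s-2)*y + (g-3/2) := by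
    nlinarith [hqid, sq_nonneg (2*(g-1)*y - (g*s-2)), hg1]
  -- A ≥ Abar > 0
  have hy0 : 0 < y := hx.trans hxy
  have habar : 0 < 1.76*x^3 + 1.24*x^2*y + 3.61*x*y^2 + 0.42*y^3 - 2.501*x^2 - 4.268*x*y
      - 4.379*y^2 + 1.181*x + 2.835*y := aanum x y hx.le hxy.le hy0 hy1
  have m3 : (0:ℝ) ≤ x^3 := by positivity
  have m21 : (0:ℝ) ≤ x^2*y := by positivity
  have m12 : (0:ℝ) ≤ x*y^2 := by positivity
  have m03 : (0:ℝ) ≤ y^3 := by positivity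
  have m2 : (0:ℝ) ≤ x^2 := by positivity
  have m11 : (0:ℝ) ≤ x*y := by positivity
  have m02 : (0:ℝ) ≤ y^2 := by positivity
  have g3 : 0 ≤ (-2*s*g + 4*g - 1.76)*x^3 := mul_nonneg (by linarith) m3
  have g21 : 0 ≤ (2*s*g - 2*g - 1.24)*(x^2*y) := mul_nonneg (by linarith) m21
  have g12 : 0 ≤ (-2*s*g + 2*s + 6*g - 4 - 3.61)*(x*y^2) := mul_nonneg (by linarith) m12
  have g03 : 0 ≤ (2*s*g - 2*s - 2*g + 2 - 0.42)*y^3 := mul_nonneg (by linarith) m03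
  have g2 : 0 ≤ (-4*s*g + 4*g + 2.501)*x^2 := mul_nonneg (by linarith) m2
  have g11 : 0 ≤ (-2*s*g + 4.268)*(x*y) := mul_nonneg (by linarith) m11
  have g02 : 0 ≤ (4*s - 4*g - 4 + 4.379)*y^2 := mul_nonneg (by linarith) m02
  have g1 : 0 ≤ (-2*s*g + s + 4*g - 2 - 1.181)*x := mul_nonneg (by linarith) hx.le
  have g01 : 0 ≤ (2*s*g - s - 2*g + 3 - 2.835)*y := mul_nonneg (by linarith) hy0.le
  have hA : 0 < -2*x^3*s*g + 2*x^2*y*s*g - 2*x*y^2*s*g + 2*y^3*s*g + 4*x^3*g - 2*x^2*y*g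
      - 4*x^2*s*g + 2*x*y^2*s + 6*x*y^2*g - 2*x*y*s*g - 2*y^3*s - 2*y^3*g + 4*x^2*g
      - 4*x*y^2 - 2*x*s*g + 2*y^3 + 4*y^2*s - 4*y^2*g + 2*y*s*g + x*s + 4*x*g
      - 4*y^2 - y*s - 2*y*g - 2*x + 3*y := by
    linarith [habar, g3, g21, g12, g03, g2, g11, g02, g1, g01]
  have hdec : (x^2 + y^2 + (y + (s-1)*x)^2) * (g*((x-s/2)^2+(y-s/2)^2) - 3/2 - y^2)
        + 2*(y + (s-1)*x)*(s*x + 2*y^2)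
      = x*(-2*x^3*s*g + 2*x^2*y*s*g - 2*x*y^2*s*g + 2*y^3*s*g + 4*x^3*g - 2*x^2*y*g
      - 4*x^2*s*g + 2*x*y^2*s + 6*x*y^2*g - 2*x*y*s*g - 2*y^3*s - 2*y^3*g + 4*x^2*g
      - 4*x*y^2 - 2*x*s*g + 2*y^3 + 4*y^2*s - 4*y^2*g + 2*y*s*g + x*s + 4*x*g
      - 4*y^2 - y*s - 2*y*g - 2*x + 3*y)
      + 2*(y^2*((g-1)*y^2 - (g*s-2)*y + (g-3/2))) := by
    linear_combination (1*x^4*g - 1*x^3*s*g + 1*x^2*y^2*g - 1*x^2*y*s*g + (1/2)*x^2*s^2*g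
      + 2*x^3*g - 1*x^2*y^2 - 1*x^2*s*g - 2*x*y^2*g + 1*x*y*s*g + 2*x^2*g - 1*x*y*g
      + 1*y^2*g + (1/2)*x^2)*hs2
  nlinarith [mul_pos hx hA, mul_nonneg (sq_nonneg y) hq, hdec]

/-- P4 positivity on region P6, part b : 0.55 ≤ y ≤ s/2 -/
lemma p4p6b (x y s g : ℝ) (hs2 : s^2 = 2) (hs1 : 1.41421 < s) (hs1' : s < 1.41422)
    (hg1 : 1.5087 < g) (hg2 : g < 1.5089)
    (hx : 0 < x) (hxy : x < y) (hy1 : 0.55 ≤ y) (hys : y ≤ s/2) :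
    0 < (x^2 + y^2 + (y + (s-1)*x)^2) * (g*((x-s/2)^2+(y-s/2)^2) - 3/2 - y^2)
        + 2*(y + (s-1)*x)*(s*x + 2*y^2) := by
  have hsg1 : s*g < 2.13392 := by
    nlinarith [mul_nonneg (sub_nonneg.2 hs1'.le) (sub_nonneg.2 hg1.le)]
  have hsg2 : 2.1336 < s*g := by
    nlinarith [mul_nonneg (sub_nonneg.2 hs1.le) (sub_nonneg.2 hg1.le)]
  have hd : 0 < y - x := sub_pos.2 hxy
  have hz : 0 ≤ s/2 - y := sub_nonneg.2 hys
  have hz1 : s/2 - y ≤ 0.158 := by linarith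
  have hdz : (y - x) + (s/2 - y) ≤ 0.70711 := by linarith
  have hN := n6num (y-x) (s/2-y) hd hz hz1 hdz
  have md2 : (0:ℝ) ≤ (y-x)^2 := sq_nonneg _
  have mz2 : (0:ℝ) ≤ (s/2-y)^2 := sq_nonneg _
  have mzd : (0:ℝ) ≤ (y-x)*(s/2-y) := mul_nonneg hd.le hz
  have mz3 : (0:ℝ) ≤ (s/2-y)^3 := by positivity
  have mdz2 : (0:ℝ) ≤ (y-x)*(s/2-y)^2 := mul_nonneg hd.le mz2
  have md2z : (0:ℝ) ≤ (y-x)^2*(s/2-y) := mul_nonneg md2 hz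
  have md3 : (0:ℝ) ≤ (y-x)^3 := by positivity
  have mz4 : (0:ℝ) ≤ (s/2-y)^4 := by positivity
  have mdz3 : (0:ℝ) ≤ (y-x)*(s/2-y)^3 := mul_nonneg hd.le mz3
  have md2z2 : (0:ℝ) ≤ (y-x)^2*(s/2-y)^2 := mul_nonneg md2 mz2
  have md3z : (0:ℝ) ≤ (y-x)^3*(s/2-y) := mul_nonneg md3 hz
  have md4 : (0:ℝ) ≤ (y-x)^4 := by positivity
  have e02 : 0 ≤ (4*g - 2 - 4.03)*(s/2-y)^2 := mul_nonneg (by linarith) mz2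
  have e11 : 0 ≤ (4*g - 2 - 4.03)*((y-x)*(s/2-y)) := mul_nonneg (by linarith) mzd
  have e20 : 0 ≤ (2*s + 2*g - 4 - 1.845)*(y-x)^2 := mul_nonneg (by linarith) md2
  have e03 : 0 ≤ (-8*s*g + 4*s + 11.42)*(s/2-y)^3 := mul_nonneg (by linarith) mz3
  have e12 : 0 ≤ (-14*s*g + 5*s + 4*g - 2 + 18.77)*((y-x)*(s/2-y)^2) := mul_nonneg (by linarith) mdz2
  have e21 : 0 ≤ (-10*s*g + 4*s + 4*g - 4 + 13.65)*((y-x)^2*(s/2-y)) := mul_nonneg (by linarith) md2z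
  have e30 : 0 ≤ (-3*s*g + 2*g + 3.385)*(y-x)^3 := mul_nonneg (by linarith) md3
  have e04 : 0 ≤ (8*g - 4 - 8.06)*(s/2-y)^4 := mul_nonneg (by linarith) mz4
  have e13 : 0 ≤ (-4*s*g + 2*s + 20*g - 6 - 18.46)*((y-x)*(s/2-y)^3) := mul_nonneg (by linarith) mdz3
  have e22 : 0 ≤ (-8*s*g + 2*s + 24*g - 4 - 17.96)*((y-x)^2*(s/2-y)^2) := mul_nonneg (by linarith) md2z2
  have e31 : 0 ≤ (-6*s*g + 14*g - 8.31)*((y-x)^3*(s/2-y)) := mul_nonneg (by linarith) md3z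
  have e40 : 0 ≤ (-2*s*g + 4*g - 1.766)*(y-x)^4 := mul_nonneg (by linarith) md4
  have hE : (x^2 + y^2 + (y + (s-1)*x)^2) * (g*((x-s/2)^2+(y-s/2)^2) - 3/2 - y^2)
        + 2*(y + (s-1)*x)*(s*x + 2*y^2)
      = (4*g - 2)*(s/2-y)^2 + (4*g - 2)*((y-x)*(s/2-y)) + (2*s + 2*g - 4)*(y-x)^2
      + (-8*s*g + 4*s)*(s/2-y)^3 + (-14*s*g + 5*s + 4*g - 2)*((y-x)*(s/2-y)^2)
      + (-10*s*g + 4*s + 4*g - 4)*((y-x)^2*(s/2-y)) + (-3*s*g + 2*g)*(y-x)^3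
      + (8*g - 4)*(s/2-y)^4 + (-4*s*g + 2*s + 20*g - 6)*((y-x)*(s/2-y)^3)
      + (-8*s*g + 2*s + 24*g - 4)*((y-x)^2*(s/2-y)^2) + (-6*s*g + 14*g)*((y-x)^3*(s/2-y))
      + (-2*s*g + 4*g)*(y-x)^4 := by
    linear_combination (1*x^4*g - 1*x^3*s*g + 1*x^2*y^2*g - 1*x^2*y*s*g + (1/2)*x^2*s^2*g
      - 1*x^3*g - 1*x^2*y^2 + 1*x^2*y*g + 1*x^2*s*g - 1*x*y^2*g - (1/2)*x*s^2*g + 1*y^3*g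
      - 1*y^2*s*g + (1/2)*y*s^2*g + 2*x^2*y - (1/2)*x^2*s + 1*x^2*g - 1*x*y^2
      - (1/2)*x*y*s + (1/4)*x*s^2 - 1*x*s*g - 1*y^3 + 1*y^2*s + 1*y^2*g - (1/4)*y*s^2
      - 1*y*s*g + (1/2)*s^2*g - (1/2)*x^2 + (3/2)*x*y + (1/2)*x*s - (1/2)*y^2
      + (1/2)*y*s - (1/4)*s^2)*hs2
  linarith [hN, hE, e02, e11, e20, e03, e12, e21, e30, e04, e13, e22, e31, e40]

/-- P4 positivity on region P5 -/
lemma p4p5 (x y s g : ℝ) (hs2 : s^2 = 2) (hs1 : 1.41421 < s) (hs1' : s < 1.41422)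
    (hg1 : 1.5087 < g) (hg2 : g < 1.5089)
    (hx : 0 < x) (hy : s/2 < y) (hr : x^2 + y^2 ≤ 1) :
    0 < (x^2 + y^2 + (y + (s-1)*x)^2) * (g*((x-s/2)^2+(y-s/2)^2) - 3/2 - y^2)
        + 2*(y + (s-1)*x)*(s*x + 2*y^2) := by
  have hsg1 : s*g < 2.13392 := by
    nlinarith [mul_nonneg (sub_nonneg.2 hs1'.le) (sub_nonneg.2 hg1.le)]
  have hsg2 : 2.1336 < s*g := by
    nlinarith [mul_nonneg (sub_nonneg.2 hs1.le) (sub_nonneg.2 hg1.le)]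
  have hy0 : 0 < y := by linarith
  have hxs : x < s/2 := by nlinarith
  have hyle : y ≤ 1 := by nlinarith
  have hv : 0 < y - s/2 := sub_pos.2 hy
  have hv1 : y - s/2 ≤ 0.293 := by linarith
  have hp : 0 ≤ s/2 - x := (sub_pos.2 hxs).le
  have hp1 : s/2 - x ≤ 0.70711 := by linarith
  have hN := n5num (s/2-x) (y-s/2) hv hv1 hp hp1
  have mp2 : (0:ℝ) ≤ (s/2-x)^2 := sq_nonneg _
  have mv2 : (0:ℝ) ≤ (y-s/2)^2 := sq_nonneg _
  have mpv : (0:ℝ) ≤ (s/2-x)*(y-s/2) := mul_nonneg hp hv.le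
  have mp3 : (0:ℝ) ≤ (s/2-x)^3 := by positivity
  have mv3 : (0:ℝ) ≤ (y-s/2)^3 := by positivity
  have mpv2 : (0:ℝ) ≤ (s/2-x)*(y-s/2)^2 := mul_nonneg hp mv2
  have mp2v : (0:ℝ) ≤ (s/2-x)^2*(y-s/2) := mul_nonneg mp2 hv.le
  have mv4 : (0:ℝ) ≤ (y-s/2)^4 := by positivity
  have mpv3 : (0:ℝ) ≤ (s/2-x)*(y-s/2)^3 := mul_nonneg hp mv3
  have mp2v2 : (0:ℝ) ≤ (s/2-x)^2*(y-s/2)^2 := mul_nonneg mp2 mv2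
  have mp3v : (0:ℝ) ≤ (s/2-x)^3*(y-s/2) := mul_nonneg mp3 hv.le
  have mp4 : (0:ℝ) ≤ (s/2-x)^4 := by positivity
  have e20 : 0 ≤ (2*s + 2*g - 4 - 1.845)*(s/2-x)^2 := mul_nonneg (by linarith) mp2
  have e02 : 0 ≤ (2*s + 2*g - 4 - 1.845)*(y-s/2)^2 := mul_nonneg (by linarith) mv2
  have e11 : 0 ≤ (4*s - 6 + 0.344)*((s/2-x)*(y-s/2)) := mul_nonneg (by linarith) mpv
  have e12 : 0 ≤ (-3*s*g - 3*s + 2*g + 6 + 1.628)*((s/2-x)*(y-s/2)^2) := mul_nonneg (by linarith) mpv2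
  have e21 : 0 ≤ (1*s*g - 4*s + 2*g + 4)*((s/2-x)^2*(y-s/2)) := mul_nonneg (by linarith) mp2v
  have e22 : 0 ≤ (-2*s*g + 2*s + 6*g - 4)*((s/2-x)^2*(y-s/2)^2) := mul_nonneg (by linarith) mp2v2
  have e03 : 0 ≤ (1*s*g - 3*s + 2*g + 2)*(y-s/2)^3 := mul_nonneg (by linarith) mv3
  have e04 : 0 ≤ (2*g - 2)*(y-s/2)^4 := mul_nonneg (by linarith) mv4
  have e13 : 0 ≤ (-2*s*g + 2*s + 2*g - 2 + 0.423)*((s/2-x)*(y-s/2)^3) := mul_nonneg (by linarith) mpv3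
  have e30 : 0 ≤ (-3*s*g + 2*g + 3.385)*(s/2-x)^3 := mul_nonneg (by linarith) mp3
  have e31 : 0 ≤ (-2*s*g + 2*g + 1.252)*((s/2-x)^3*(y-s/2)) := mul_nonneg (by linarith) mp3v
  have e40 : 0 ≤ (-2*s*g + 4*g - 1.766)*(s/2-x)^4 := mul_nonneg (by linarith) mp4
  have hE : (x^2 + y^2 + (y + (s-1)*x)^2) * (g*((x-s/2)^2+(y-s/2)^2) - 3/2 - y^2)
        + 2*(y + (s-1)*x)*(s*x + 2*y^2)
      = (2*s + 2*g - 4)*(s/2-x)^2 + (2*s + 2*g - 4)*(y-s/2)^2 + (4*s - 6)*((s/2-x)*(y-s/2))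
      + (-3*s*g - 3*s + 2*g + 6)*((s/2-x)*(y-s/2)^2) + (1*s*g - 4*s + 2*g + 4)*((s/2-x)^2*(y-s/2))
      + (-2*s*g + 2*s + 6*g - 4)*((s/2-x)^2*(y-s/2)^2) + (1*s*g - 3*s + 2*g + 2)*(y-s/2)^3
      + (2*g - 2)*(y-s/2)^4 + (-2*s*g + 2*s + 2*g - 2)*((s/2-x)*(y-s/2)^3)
      + (-3*s*g + 2*g)*(s/2-x)^3 + (-2*s*g + 2*g)*((s/2-x)^3*(y-s/2))
      + (-2*s*g + 4*g)*(s/2-x)^4 := by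
    linear_combination (1*x^4*g - 1*x^3*s*g + 1*x^2*y^2*g - 1*x^2*y*s*g + (1/2)*x^2*s^2*g
      - 1*x^3*g - 1*x^2*y^2 + 1*x^2*y*g + 1*x^2*s*g - 1*x*y^2*g - (1/2)*x*s^2*g + 1*y^3*g
      - 1*y^2*s*g + (1/2)*y*s^2*g + 2*x^2*y - (1/2)*x^2*s + 1*x^2*g - 1*x*y^2
      - (1/2)*x*y*s + (1/4)*x*s^2 - 1*x*s*g - 1*y^3 + 1*y^2*s + 1*y^2*g - (1/4)*y*s^2
      - 1*y*s*g + (1/2)*s^2*g - (1/2)*x^2 + (3/2)*x*y + (1/2)*x*s - (1/2)*y^2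
      + (1/2)*y*s - (1/4)*s^2)*hs2
  linarith [hN, hE, e20, e02, e11, e12, e21, e22, e03, e04, e13, e30, e31, e40]

/-- If (x,y) ∈ P₅ ∪ P₆, then |T(x,y) − (α,α)|² < γ |(x,y) − (α,α)|²,
where α = 1/√2 and γ = 5/2 − √2 + (1/2)√(29 − 20√2). -/
theorem stmt11 (x y : ℝ)
    (h : (x ^ 2 + y ^ 2 ≤ 1 ∧ 0 < x ∧ 1 / Real.sqrt 2 < y) ∨
         (0 < x ∧ x < y ∧ y ≤ 1 / Real.sqrt 2)) :
    let α : ℝ := 1 / Real.sqrt 2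
    let γ : ℝ := 5/2 - Real.sqrt 2 + (1/2) * Real.sqrt (29 - 20 * Real.sqrt 2)
    let ρ : ℝ := Real.sqrt (x ^ 2 + y ^ 2)
    let x₁ : ℝ := x / ρ
    let y₁ : ℝ := α + (1 - 1 / ρ) * y
    (x₁ - α) ^ 2 + (y₁ - α) ^ 2 < γ * ((x - α) ^ 2 + (y - α) ^ 2) := by
  intro α γ ρ x₁ y₁
  set s : ℝ := Real.sqrt 2 with hsdef
  have hs2 : s^2 = 2 := Real.sq_sqrt (by norm_num)
  have hsnn : 0 ≤ s := Real.sqrt_nonneg 2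
  have hs1 : 1.41421 < s := by nlinarith
  have hs1' : s < 1.41422 := by nlinarith
  set w : ℝ := Real.sqrt (29 - 20 * Real.sqrt 2) with hwdef
  have hw2 : w^2 = 29 - 20*s := by
    rw [hwdef, hsdef]; exact Real.sq_sqrt (by nlinarith)
  have hwn : 0 ≤ w := Real.sqrt_nonneg _
  have hgdef : γ = 5/2 - s + (1/2)*w := rfl
  have hg : γ^2 + 1 = (5 - 2*s)*γ := by
    linear_combination (γ - 5/2 + s + w/2)*hgdef + (1/4)*hw2 - hs2
  have hg1 : 1.5087 < γ := by nlinarith [hw2, sq_nonneg (w - (2*s - 1.9826))]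
  have hg2 : γ < 1.5089 := by nlinarith [hw2, sq_nonneg (w - (2*s - 1.9822))]
  have hαdef : α = 1/s := rfl
  have hsne : s ≠ 0 := by positivity
  have hα : α = s/2 := by rw [hαdef]; field_simp; linarith
  -- basic positivity of ρ
  have hx : 0 < x := by rcases h with ⟨_, hx, _⟩ | ⟨hx, _, _⟩ <;> exact hx
  have hy0 : 0 < y := by
    rcases h with ⟨_, _, hy⟩ | ⟨hx', hxy, _⟩
    · calc (0:ℝ) < 1/s := by positivity
      _ < y := hy
    · linarith
  have hρdef : ρ = Real.sqrt (x^2 + y^2) := rfl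
  have hρ2 : ρ^2 = x^2 + y^2 := by rw [hρdef]; exact Real.sq_sqrt (by positivity)
  have hρ : 0 < ρ := by rw [hρdef]; exact Real.sqrt_pos.2 (by positivity)
  -- the key quantity Φ
  have hΦ : 0 < ρ*(γ*((x-s/2)^2+(y-s/2)^2) - 3/2 - y^2) + s*x + 2*y^2 := by
    rcases le_or_gt 0 (γ*((x-s/2)^2+(y-s/2)^2) - 3/2 - y^2) with hc | hc
    · have h1 : 0 ≤ ρ*(γ*((x-s/2)^2+(y-s/2)^2) - 3/2 - y^2) := mul_nonneg hρ.le hc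
      nlinarith [mul_pos (show (0:ℝ) < s by positivity) hx, sq_nonneg y]
    · -- use P4
      have hl : 0 < y + (s-1)*x := by nlinarith
      have hP4 : 0 < (x^2 + y^2 + (y + (s-1)*x)^2) * (γ*((x-s/2)^2+(y-s/2)^2) - 3/2 - y^2)
          + 2*(y + (s-1)*x)*(s*x + 2*y^2) := by
        rcases h with ⟨hr, hx', hy⟩ | ⟨hx', hxy, hy⟩
        · exact p4p5 x y s γ hs2 hs1 hs1' hg1 hg2 hx (by rw [← hα]; exact hy) hr
        · rcases le_or_gt y 0.55 with hy55 | hy55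
          · exact p4p6a x y s γ hs2 hs1 hs1' hg hg1 hg2 hx hxy hy55
          · exact p4p6b x y s γ hs2 hs1 hs1' hg1 hg2 hx hxy hy55.le (by rw [← hα]; exact hy)
      have hid : 2*(y + (s-1)*x)*(ρ*(γ*((x-s/2)^2+(y-s/2)^2) - 3/2 - y^2) + s*x + 2*y^2)
          = ((x^2 + y^2 + (y + (s-1)*x)^2) * (γ*((x-s/2)^2+(y-s/2)^2) - 3/2 - y^2)
            + 2*(y + (s-1)*x)*(s*x + 2*y^2))
            + (-(γ*((x-s/2)^2+(y-s/2)^2) - 3/2 - y^2))*(ρ - (y + (s-1)*x))^2 := by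
        linear_combination (γ*((x-s/2)^2+(y-s/2)^2) - 3/2 - y^2)*hρ2
      nlinarith [hP4, hid, hl,
        mul_nonneg (neg_nonneg.2 hc.le) (sq_nonneg (ρ - (y + (s-1)*x)))]
  -- reduce the goal
  have hgoal : (x/ρ - α)^2 + (α + (1 - 1/ρ)*y - α)^2 < γ*((x-α)^2 + (y-α)^2) := by
    rw [hα]
    have hρne : ρ ≠ 0 := hρ.ne'
    have expand : (x/ρ - s/2)^2 + (s/2 + (1 - 1/ρ)*y - s/2)^2
        = ((x - (s/2)*ρ)^2 + (ρ-1)^2*y^2)/ρ^2 := by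
      field_simp
      ring
    rw [expand, div_lt_iff₀ (by positivity)]
    have hTT : γ*((x-s/2)^2 + (y-s/2)^2)*ρ^2 - ((x - (s/2)*ρ)^2 + (ρ-1)^2*y^2)
        = ρ*(ρ*(γ*((x-s/2)^2+(y-s/2)^2) - 3/2 - y^2) + s*x + 2*y^2) := by
      linear_combination (3/2 - s^2/4)*hρ2 - ((x^2+y^2)/4)*hs2
    nlinarith [mul_pos hρ hΦ, hTT]
  exact hgoal
end

section
/- The polynomial 64w⁸ − 64√2 w⁷ − 64w⁶ + 80√2 w⁵ + 52w⁴ − 72√2 w³ + 12w² + 16√2 w − 7 has no real root in the half-open interval [0, 1/√2); in fact its only real roots ≥ 0 are w = 1/√2 and w = (√2/4)(√(2√2+1) + √2 − 1). -/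
/-- The polynomial 64w⁸ − 64√2 w⁷ − 64w⁶ + 80√2 w⁵ + 52w⁴ − 72√2 w³ + 12w²
+ 16√2 w − 7 has no root in [0, 1/√2). -/
theorem stmt13 (w : ℝ) (hw : w ∈ Set.Ico (0:ℝ) (1 / Real.sqrt 2)) :
    64 * w ^ 8 - 64 * Real.sqrt 2 * w ^ 7 - 64 * w ^ 6 + 80 * Real.sqrt 2 * w ^ 5
      + 52 * w ^ 4 - 72 * Real.sqrt 2 * w ^ 3 + 12 * w ^ 2
      + 16 * Real.sqrt 2 * w - 7 ≠ 0 := by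
  obtain ⟨hw0, hw1⟩ := hw
  set s := Real.sqrt 2 with hs
  have hspos : 0 < s := Real.sqrt_pos.mpr (by norm_num)
  have h2 : s ^ 2 = 2 := Real.sq_sqrt (by norm_num)
  set x := s * w with hx
  have hx0 : 0 ≤ x := mul_nonneg hspos.le hw0
  have hx1 : x < 1 := by
    have h := (lt_div_iff₀ hspos).mp hw1
    nlinarith
  have key :
      64 * w ^ 8 - 64 * s * w ^ 7 - 64 * w ^ 6 + 80 * s * w ^ 5
        + 52 * w ^ 4 - 72 * s * w ^ 3 + 12 * w ^ 2 + 16 * s * w - 7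
      = (x - 1) ^ 4 * (4 * x ^ 4 + 8 * x ^ 3 - 12 * x - 7) := by
    rw [hx]
    linear_combination (-16 * w ^ 7 * s ^ 3 + 12 * w ^ 5 * s ^ 3 - 16 * w ^ 8 * s ^ 2
      + 64 * w ^ 6 * s ^ 2 - 41 * w ^ 4 * s ^ 2 + 32 * w ^ 7 * s + 44 * w ^ 3 * s
      - 72 * w ^ 5 * s + 32 * w ^ 6 - 6 * w ^ 2 - 18 * w ^ 4 - 32 * w ^ 8
      - (4 * w ^ 4 * (s ^ 2 + 2) + 8 * s * w ^ 3) * (s * w - 1) ^ 4) * h2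
  have hP : 0 < (x - 1) ^ 4 := by
    have hne : x - 1 ≠ 0 := by linarith
    positivity
  have hG : 4 * x ^ 4 + 8 * x ^ 3 - 12 * x - 7 < 0 := by
    nlinarith [mul_nonneg hx0 hx0, mul_nonneg (mul_nonneg hx0 hx0) hx0,
      mul_nonneg (mul_nonneg (mul_nonneg hx0 hx0) hx0) hx0, sq_nonneg (x - 1),
      mul_nonneg (mul_nonneg hx0 hx0) (sub_nonneg.mpr hx1.le)]
  rw [key]
  exact ne_of_lt (mul_neg_of_pos_of_neg hP hG)
end

section
/- Let α = 1/√2 and consider the sequence (xₙ,yₙ) generated by xₙ₊₁ = xₙ/ρₙ, yₙ₊₁ = α + (1 − 1/ρₙ)yₙ with ρₙ = √(xₙ²+yₙ²). If x₀ > 0 and yₙ < 0 for all n ≥ 0, then a contradiction follows; hence if (x₀,y₀) satisfies y₀ < 0 < x₀, there exists k ∈ ℕ with y_k ≥ 0 (and then some later iterate has positive second coordinate). -/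
/-- For the DR recursion with α = 1/√2, if x₀ > 0 and y₀ ≤ 0, it is impossible
that yₙ < 0 for all n. -/
theorem stmt17 (x y : ℕ → ℝ)
    (hrec : ∀ n, x (n + 1) = x n / Real.sqrt (x n ^ 2 + y n ^ 2) ∧
      y (n + 1) = 1 / Real.sqrt 2 + (1 - 1 / Real.sqrt (x n ^ 2 + y n ^ 2)) * y n)
    (hx0 : 0 < x 0) (hy0 : y 0 ≤ 0) :
    ¬ (∀ n, y n < 0) := by
  intro h
  set α : ℝ := 1 / Real.sqrt 2 with hα
  have hαpos : 0 < α := by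
    have : (0:ℝ) < Real.sqrt 2 := Real.sqrt_pos.2 (by norm_num)
    positivity
  have key : ∀ n, y n + α ≤ y (n + 1) := by
    intro n
    have hy := h n
    have hρ : 0 < Real.sqrt (x n ^ 2 + y n ^ 2) := by
      apply Real.sqrt_pos.2
      nlinarith [sq_nonneg (x n), sq_nonneg (y n)]
    have hdiv : y n / Real.sqrt (x n ^ 2 + y n ^ 2) < 0 :=
      div_neg_of_neg_of_pos hy hρ
    have hr := (hrec n).2
    have hexp : (1 - 1 / Real.sqrt (x n ^ 2 + y n ^ 2)) * y n
        = y n - y n / Real.sqrt (x n ^ 2 + y n ^ 2) := by ring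
    rw [hr, hexp]
    linarith
  have grow : ∀ n : ℕ, y 0 + n * α ≤ y n := by
    intro n
    induction n with
    | zero => simp
    | succ k ih =>
      have := key k
      push_cast
      push_cast at ih
      linarith
  obtain ⟨n, hn⟩ := exists_nat_gt (-(y 0) / α)
  have h1 : -(y 0) < n * α := by
    have := (div_lt_iff₀ hαpos).1 hn
    linarith
  have := grow n
  have := h n
  linarith
end

section
/- Let α = 1/√2 and consider the Douglas–Rachford recursion xₙ₊₁ = xₙ/ρₙ, yₙ₊₁ = α + (1 − 1/ρₙ)yₙ, ρₙ = √(xₙ²+yₙ²), with x₀ > 0. It is impossible that 0 < xₙ < yₙ for all n ≥ k for some k; i.e., for every m there exists n ≥ m with xₙ ≥ yₙ. -/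
open Filter Topology

set_option maxHeartbeats 1000000 in
lemma key18 (a x y r : ℝ) (ha2 : a^2 = 1/2) (hap : 0 < a)
    (hr2 : r^2 = x^2 + y^2) (hrp : 0 < r)
    (hx1 : a - 1/1000 ≤ x) (hx2 : x ≤ a + 1/1000)
    (hy1 : a ≤ y) (hy2 : y ≤ a + 1/1000) (hxy : x ≤ y) :
    (y - a ≤ (a + (1 - 1/r)*y) - x/r) ∧
    ((a + (1 - 1/r)*y) - x/r ≤ (y - a) + (y - x)^2/2) ∧
    ((a + (1 - 1/r)*y) - a ≤ (y - a) - (y - x)/2 + ((y - a) + (y - x))/50) := by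
  have ha4 : (0.707106:ℝ) < a := by nlinarith
  have ha5 : a < 0.707107 := by nlinarith
  have hxpos : 0 < x := by linarith
  have hrl : (0.9992 : ℝ) ≤ r := by nlinarith
  have hru : r ≤ 1.0015 := by nlinarith
  have hprod : (2*a*r - (x+y)) * (2*a*r + (x+y)) = (x - y)^2 := by
    linear_combination (4*r^2) * ha2 + 2 * hr2
  have hsum : 0 < 2*a*r + (x+y) := by nlinarith
  have h2ar : 0 ≤ 2*a*r - (x+y) := by nlinarith [sq_nonneg (x-y)]
  have ident : (a + (1 - 1/r)*y) - x/r = (y - a) + (2*a*r - (x+y))/r := by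
    field_simp; ring
  refine ⟨?_, ?_, ?_⟩
  · rw [ident]
    have := div_nonneg h2ar hrp.le
    linarith
  · rw [ident]
    have hbig : 2 ≤ r*(2*a*r + (x+y)) := by nlinarith
    have h1 : (2*a*r - (x+y))*2 ≤ (2*a*r - (x+y))*(r*(2*a*r+(x+y))) :=
      mul_le_mul_of_nonneg_left hbig h2ar
    have h2 : (2*a*r - (x+y))*(r*(2*a*r+(x+y))) = r*(x-y)^2 := by
      linear_combination r * hprod
    have h3 : (2*a*r - (x+y))/r ≤ (y-x)^2/2 := by
      rw [div_le_iff₀ hrp]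
      nlinarith
    linarith
  · have hq1 : (1.9978:ℝ) ≤ x^2+y^2+r := by nlinarith
    have hq2 : x^2+y^2+r ≤ (2.0043:ℝ) := by nlinarith
    have hv1 : (0:ℝ) ≤ y - a := by linarith
    have expand : y*(x^2+y^2-1) = ((x-a)+(y-a)) + a*((x-a)^2+(y-a)^2)
        + 2*a*(y-a)*((x-a)+(y-a)) + (y-a)*((x-a)^2+(y-a)^2) := by
      linear_combination (2*(a+(x-a)+2*(y-a))) * ha2
    have F2 : (0:ℝ) ≤ (y-a)*(0.001-(y-a)) := mul_nonneg hv1 (by linarith)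
    have F6 : (0:ℝ) ≤ (0.707107-a)*(x-a)^2 := mul_nonneg (by linarith) (sq_nonneg _)
    have F7 : (0:ℝ) ≤ (0.707107-a)*(y-a)^2 := mul_nonneg (by linarith) (sq_nonneg _)
    have F8 : (0:ℝ) ≤ (0.001-(y-a))*((x-a)^2+(y-a)^2) :=
      mul_nonneg (by linarith) (by positivity)
    have key : y*(x^2+y^2-1) ≤
        ((y - a) - (y - x)/2 + ((y - a) + (y - x))/50) * (x^2+y^2+r) := by
      rcases le_or_gt 0 ((y - a) - (y - x)/2 + ((y - a) + (y - x))/50) with hRs | hRs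
      · have hRu : (0:ℝ) ≤ (x-a) + 1.125*(y-a) := by linarith
        have h1 : ((y - a) - (y - x)/2 + ((y - a) + (y - x))/50) * 1.9978 ≤
            ((y - a) - (y - x)/2 + ((y - a) + (y - x))/50) * (x^2+y^2+r) :=
          mul_le_mul_of_nonneg_left hq1 hRs
        have F1 : (0:ℝ) ≤ ((x-a)+1.125*(y-a))*(0.001-(x-a)) := mul_nonneg hRu (by linarith)
        have F4 : (0:ℝ) ≤ ((x-a)+1.125*(y-a))*(y-a) := mul_nonneg hRu hv1
        have F5 : (0:ℝ) ≤ a*(((y-a)-(x-a))*(y-a)) :=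
          mul_nonneg hap.le (mul_nonneg (by linarith) hv1)
        have h2 : y*(x^2+y^2-1) ≤ ((y - a) - (y - x)/2 + ((y - a) + (y - x))/50) * 1.9978 := by
          rw [expand]
          linarith [F1, F2, F4, F5, F6, F7, F8, hxy, hv1]
        linarith
      · have hun : x - a < 0 := by nlinarith
        have h1 : ((y - a) - (y - x)/2 + ((y - a) + (y - x))/50) * 2.0043 ≤
            ((y - a) - (y - x)/2 + ((y - a) + (y - x))/50) * (x^2+y^2+r) :=
          mul_le_mul_of_nonpos_left hq2 hRs.le
        have G1 : (0:ℝ) ≤ (-(x-a))*((x-a)+0.001) := mul_nonneg (by linarith) (by linarith)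
        have G5 : (0:ℝ) ≤ a*((-(x-a))*(y-a)) :=
          mul_nonneg hap.le (mul_nonneg (by linarith) hv1)
        have h2 : y*(x^2+y^2-1) ≤ ((y - a) - (y - x)/2 + ((y - a) + (y - x))/50) * 2.0043 := by
          rw [expand]
          linarith [G1, F2, G5, F6, F7, F8, hun, hv1]
        linarith
    have ident2 : (a + (1 - 1/r)*y) - a = (y*r - y)/r := by field_simp; ring
    rw [ident2, div_le_iff₀ hrp]
    have h3 : y*(x^2+y^2-1) = (y*r - y)*(r+1) := by linear_combination (-y) * hr2
    have h4 : ((y - a) - (y - x)/2 + ((y - a) + (y - x))/50)*(x^2+y^2+r) =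
        (((y - a) - (y - x)/2 + ((y - a) + (y - x))/50)*r)*(r+1) := by
      linear_combination (-((y - a) - (y - x)/2 + ((y - a) + (y - x))/50)) * hr2
    have h5 : (y*r - y)*(r+1) ≤ (((y - a) - (y - x)/2 + ((y - a) + (y - x))/50)*r)*(r+1) := by
      rw [← h3, ← h4]; exact key
    exact le_of_mul_le_mul_right h5 (by linarith)

set_option maxHeartbeats 1000000 in
/-- For the DR recursion with α = 1/√2 and x₀ > 0, the iterates cannot stay
strictly above the diagonal forever: for every m there is n ≥ m with xₙ ≥ yₙ. -/
theorem stmt18 (x y : ℕ → ℝ)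
    (hrec : ∀ n, x (n + 1) = x n / Real.sqrt (x n ^ 2 + y n ^ 2) ∧
      y (n + 1) = 1 / Real.sqrt 2 + (1 - 1 / Real.sqrt (x n ^ 2 + y n ^ 2)) * y n)
    (hx0 : 0 < x 0) :
    ∀ m : ℕ, ∃ n ≥ m, x n ≥ y n := by
  by_contra hcon
  push_neg at hcon
  obtain ⟨m, hm⟩ := hcon
  set a : ℝ := 1 / Real.sqrt 2 with ha_def
  have hap : 0 < a := by rw [ha_def]; positivity
  have ha2 : a^2 = 1/2 := by
    rw [ha_def, div_pow, one_pow, Real.sq_sqrt (by norm_num : (0:ℝ) ≤ 2)]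
  have hxpos : ∀ n, 0 < x n := by
    intro n
    induction n with
    | zero => exact hx0
    | succ k ih =>
      rw [(hrec k).1]
      exact div_pos ih (Real.sqrt_pos.mpr (by nlinarith [sq_nonneg (y k)]))
  have hr2 : ∀ n, (Real.sqrt (x n^2 + y n^2))^2 = x n^2 + y n^2 :=
    fun n => Real.sq_sqrt (by positivity)
  have hrpos : ∀ n, 0 < Real.sqrt (x n^2 + y n^2) :=
    fun n => Real.sqrt_pos.mpr (by nlinarith [hxpos n, sq_nonneg (y n)])
  -- y is decreasing above the diagonal
  have hdec : ∀ n, m ≤ n → y (n+1) < y n := by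
    intro n hn
    have hlt := hm n hn
    have hx := hxpos n
    have rpos := hrpos n
    have r2 := hr2 n
    have e : (a * Real.sqrt (x n^2 + y n^2))^2 = (x n^2 + y n^2)/2 := by
      rw [mul_pow, ha2, r2]; ring
    have har : a * Real.sqrt (x n^2 + y n^2) < y n := by
      nlinarith [e, mul_pos hap rpos, mul_pos (sub_pos.2 hlt) (by linarith : 0 < y n + x n)]
    have h5 : a < y n / Real.sqrt (x n^2 + y n^2) := by
      rw [lt_div_iff₀ rpos]; linarith
    rw [(hrec n).2]
    have e2 : (1 - 1/Real.sqrt (x n^2 + y n^2)) * y n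
        = y n - y n / Real.sqrt (x n^2 + y n^2) := by ring
    rw [e2]; linarith
  set X : ℕ → ℝ := fun k => x (m+k) with hX
  set Y : ℕ → ℝ := fun k => y (m+k) with hY
  have hXYlt : ∀ k, X k < Y k := fun k => hm (m+k) (Nat.le_add_right _ _)
  have hXpos : ∀ k, 0 < X k := fun k => hxpos (m+k)
  have hYanti : Antitone Y :=
    antitone_nat_of_succ_le (fun k => le_of_lt (hdec (m+k) (Nat.le_add_right _ _)))
  have hYbdd : BddBelow (Set.range Y) := by
    refine ⟨0, ?_⟩
    rintro z ⟨k, rfl⟩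
    exact le_of_lt (lt_trans (hXpos k) (hXYlt k))
  have hYtend : Tendsto Y atTop (𝓝 (⨅ i, Y i)) := tendsto_atTop_ciInf hYanti hYbdd
  set L : ℝ := ⨅ i, Y i with hLdef
  have hL0 : 0 ≤ L := le_ciInf (fun i => le_of_lt (lt_trans (hXpos i) (hXYlt i)))
  have hrecX : ∀ k, X (k+1) = X k / Real.sqrt (X k^2 + Y k^2) := fun k => (hrec (m+k)).1
  have hrecY : ∀ k, Y (k+1) = a + (1 - 1/Real.sqrt (X k^2 + Y k^2)) * Y k :=
    fun k => (hrec (m+k)).2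
  have hRpos : ∀ k, 0 < Real.sqrt (X k^2 + Y k^2) := fun k => hrpos (m+k)
  have hR2 : ∀ k, (Real.sqrt (X k^2 + Y k^2))^2 = X k^2 + Y k^2 := fun k => hr2 (m+k)
  have hQ : ∀ k, Y k / Real.sqrt (X k^2 + Y k^2) = Y k - Y (k+1) + a := by
    intro k; rw [hrecY k]; ring
  have hQtend : Tendsto (fun k => Y k / Real.sqrt (X k^2 + Y k^2)) atTop (𝓝 a) := by
    have h1 : Tendsto (fun k => Y k - Y (k+1) + a) atTop (𝓝 (L - L + a)) :=
      (hYtend.sub ((tendsto_add_atTop_iff_nat 1).2 hYtend)).add_const a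
    simp only [sub_self, zero_add] at h1
    exact Tendsto.congr (fun k => (hQ k).symm) h1
  have hXsucc : ∀ k, X (k+1) = Real.sqrt (1 - (Y k / Real.sqrt (X k^2 + Y k^2))^2) := by
    intro k
    have rpos := hRpos k
    have r2 := hR2 k
    have h2 : (X k / Real.sqrt (X k^2 + Y k^2))^2
        = 1 - (Y k / Real.sqrt (X k^2 + Y k^2))^2 := by
      have hne : X k^2 + Y k^2 ≠ 0 :=
        ne_of_gt (by nlinarith [hXpos k, sq_nonneg (Y k)])
      rw [div_pow, div_pow, r2]
      field_simp
      ring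
    rw [hrecX k, ← Real.sqrt_sq (le_of_lt (div_pos (hXpos k) rpos)), h2]
  have hXtends : Tendsto (fun k => X (k+1)) atTop (𝓝 a) := by
    have h1 : Tendsto (fun k => 1 - (Y k / Real.sqrt (X k^2 + Y k^2))^2) atTop
        (𝓝 (1 - a^2)) := tendsto_const_nhds.sub (hQtend.pow 2)
    have h2 := (Real.continuous_sqrt.tendsto (1 - a^2)).comp h1
    have h3 : Real.sqrt (1 - a^2) = a := by
      rw [show (1:ℝ) - a^2 = a^2 by rw [ha2]; norm_num, Real.sqrt_sq hap.le]
    rw [h3] at h2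
    exact Tendsto.congr (fun k => (hXsucc k).symm) h2
  have hXtend : Tendsto X atTop (𝓝 a) := (tendsto_add_atTop_iff_nat 1).1 hXtends
  have hRtend : Tendsto (fun k => Real.sqrt (X k^2 + Y k^2)) atTop
      (𝓝 (Real.sqrt (a^2 + L^2))) :=
    (Real.continuous_sqrt.tendsto _).comp ((hXtend.pow 2).add (hYtend.pow 2))
  have hSpos : 0 < Real.sqrt (a^2 + L^2) := Real.sqrt_pos.2 (by positivity)
  have hQtend2 : Tendsto (fun k => Y k / Real.sqrt (X k^2 + Y k^2)) atTop
      (𝓝 (L / Real.sqrt (a^2 + L^2))) := hYtend.div hRtend (ne_of_gt hSpos)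
  have huniq : L / Real.sqrt (a^2 + L^2) = a := tendsto_nhds_unique hQtend2 hQtend
  have hLa : L = a := by
    have hS2 : (Real.sqrt (a^2 + L^2))^2 = a^2 + L^2 := Real.sq_sqrt (by positivity)
    rw [div_eq_iff (ne_of_gt hSpos)] at huniq
    have hsq := congrArg (·^2) huniq
    rw [mul_pow, hS2] at hsq
    rw [ha2] at hsq
    have h2 : L^2 = 1/2 := by linarith
    have h3 : (L - a)*(L + a) = 0 := by linear_combination h2 - ha2
    rcases mul_eq_zero.1 h3 with h | h
    · linarith
    · linarith
  have hYge : ∀ k, a ≤ Y k := by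
    intro k
    rw [← hLa, hLdef]
    exact ciInf_le hYbdd k
  have hYtend' : Tendsto Y atTop (𝓝 a) := hLa ▸ hYtend
  obtain ⟨N1, hN1⟩ := Metric.tendsto_atTop.1 hXtend (1/1000) (by norm_num)
  obtain ⟨N2, hN2⟩ := Metric.tendsto_atTop.1 hYtend' (1/1000) (by norm_num)
  set N := max N1 N2 with hN
  have hbox : ∀ k, N ≤ k →
      (a - 1/1000 ≤ X k ∧ X k ≤ a + 1/1000 ∧ a ≤ Y k ∧ Y k ≤ a + 1/1000) := by
    intro k hk
    have h1 := hN1 k (le_trans (le_max_left _ _) hk)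
    have h2 := hN2 k (le_trans (le_max_right _ _) hk)
    rw [Real.dist_eq] at h1 h2
    have h1' := abs_lt.1 h1
    have h2' := abs_lt.1 h2
    exact ⟨by linarith [h1'.1], by linarith [h1'.2], hYge k, by linarith [h2'.2]⟩
  have hk3 : ∀ k, N ≤ k →
      (Y k - a ≤ Y (k+1) - X (k+1)) ∧
      (Y (k+1) - X (k+1) ≤ (Y k - a) + (Y k - X k)^2/2) ∧
      (Y (k+1) - a ≤ (Y k - a) - (Y k - X k)/2 + ((Y k - a) + (Y k - X k))/50) := by
    intro k hk
    obtain ⟨b1, b2, b3, b4⟩ := hbox k hk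
    have r := key18 a (X k) (Y k) (Real.sqrt (X k^2 + Y k^2)) ha2 hap (hR2 k) (hRpos k)
      b1 b2 b3 b4 (le_of_lt (hXYlt k))
    rw [hrecX k, hrecY k]
    exact r
  have hdpos : ∀ k, 0 < Y k - X k := fun k => sub_pos.2 (hXYlt k)
  have htwo : ∀ k, N ≤ k →
      Y (k+2) - X (k+2) ≤ 1.03*(Y (k+1) - X (k+1)) - 0.48*(Y k - X k) := by
    intro k hk
    obtain ⟨i1, i2, i3⟩ := hk3 k hk
    obtain ⟨j1, j2, j3⟩ := hk3 (k+1) (le_trans hk (Nat.le_succ k))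
    obtain ⟨b1', b2', b3', b4'⟩ := hbox (k+1) (le_trans hk (Nat.le_succ k))
    have hd1 : Y (k+1) - X (k+1) ≤ 2/1000 := by linarith
    have hsq : (Y (k+1) - X (k+1))^2 ≤ (2/1000)*(Y (k+1) - X (k+1)) := by
      nlinarith [hdpos (k+1)]
    linarith [j2, i3, i1, hsq, hdpos k, hdpos (k+1)]
  have hchain : ∀ j : ℕ, Y (N+1+j+1) - X (N+1+j+1) ≤
      (1.03 - 0.2*(j:ℝ)) * (Y (N+1+j) - X (N+1+j)) := by
    intro j
    induction j with
    | zero =>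
      have h := htwo N le_rfl
      have e : (1.03 - 0.2*((0:ℕ):ℝ)) = 1.03 := by norm_num
      rw [e]
      have := hdpos N
      calc Y (N+1+0+1) - X (N+1+0+1) = Y (N+2) - X (N+2) := by norm_num
        _ ≤ 1.03*(Y (N+1) - X (N+1)) - 0.48*(Y N - X N) := h
        _ ≤ 1.03*(Y (N+1) - X (N+1)) := by nlinarith
        _ = 1.03 * (Y (N+1+0) - X (N+1+0)) := by norm_num
    | succ i ih =>
      have h2 := htwo (N+1+i) (by omega)
      have e1 : N+1+i+2 = N+1+(i+1)+1 := by omega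
      have e2 : N+1+i+1 = N+1+(i+1) := by omega
      rw [e1, e2] at h2
      rw [e2] at ih
      push_cast
      set D1 : ℝ := Y (N+1+i) - X (N+1+i) with hD1
      set D2 : ℝ := Y (N+1+(i+1)) - X (N+1+(i+1)) with hD2
      set D3 : ℝ := Y (N+1+(i+1)+1) - X (N+1+(i+1)+1) with hD3
      have hd1 : 0 < D1 := hdpos _
      have hd2 : 0 < D2 := hdpos _
      set c : ℝ := 1.03 - 0.2*(i:ℝ) with hc
      -- ih : D2 ≤ c * D1 ; h2 : D3 ≤ 1.03*D2 - 0.48*D1 ; goal : D3 ≤ (c - 0.2)*D2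
      rcases le_or_gt c 1.23 with hcc | hcc
      · have P1 : 0 ≤ (1.23 - c)*(c*D1 - D2) := mul_nonneg (by linarith) (by linarith)
        have P2 : 0 ≤ (c - 0.615)^2 * D1 := mul_nonneg (sq_nonneg _) hd1.le
        have goal' : D3 ≤ (c - 0.2)*D2 := by linarith [P1, P2, h2, hd1]
        have e3 : (1.03 - 0.2*((i:ℝ)+1)) = c - 0.2 := by rw [hc]; ring
        rw [e3]; exact goal'
      · have P1 : 0 ≤ (c - 1.23)*D2 := mul_nonneg (by linarith) hd2.le
        have goal' : D3 ≤ (c - 0.2)*D2 := by linarith [P1, h2, hd1, hd2]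
        have e3 : (1.03 - 0.2*((i:ℝ)+1)) = c - 0.2 := by rw [hc]; ring
        rw [e3]; exact goal'
  have h6 := hchain 6
  have hd7 := hdpos (N+1+6)
  have hd8 := hdpos (N+1+6+1)
  push_cast at h6
  linarith [h6, hd7, hd8]
end

section
/- Let α = 1/√2 and consider the Douglas–Rachford recursion xₙ₊₁ = xₙ/ρₙ, yₙ₊₁ = α + (1 − 1/ρₙ)yₙ, ρₙ = √(xₙ²+yₙ²). If (x₀,y₀) ∈ [ε, 1] × [0, 1] with ε = (1 − 2^{−1/3})^{3/2}, then the sequence (xₙ,yₙ) converges to (1/√2, 1/√2). -/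
private theorem aux_sq_le_imp {A B : ℝ} (hA : 0 ≤ A) (hB : 0 ≤ B) (h : A^2 ≤ B^2) : A ≤ B := by
  nlinarith [mul_nonneg hA hB]

private theorem aux_L1core (b r : ℝ) (hb3 : b^3 = 1/2) (hb1 : (0.79:ℝ) ≤ b) (hb2 : b ≤ 0.794)
    (h0 : 0 ≤ r) (h1 : r ≤ 1) :
    (r^2 - (1-b)^3) * (1-r)^2 ≤ r^2/2 := by
  nlinarith [sq_nonneg (r - (1-b)), mul_nonneg h0 (sub_nonneg.2 h1), sq_nonneg (r*(1-r)),
    mul_nonneg (mul_nonneg h0 h0) (sub_nonneg.2 h1), sq_nonneg ((r-(1-b))*(1-r)),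
    sq_nonneg (r+b-1), mul_nonneg (sq_nonneg (r+b-1)) h0, mul_nonneg (sq_nonneg (r+b-1)) (sub_nonneg.2 h1)]

private theorem aux_haL (a : ℝ) (ha2 : a^2 = 1/2) (ha0 : 0 < a) : (0.7071:ℝ) ≤ a := by nlinarith
private theorem aux_haU (a : ℝ) (ha2 : a^2 = 1/2) (ha0 : 0 < a) : a ≤ (0.70711:ℝ) := by nlinarith

private theorem aux_hya_lem (a y r : ℝ) (hy1 : 0 ≤ y) (hy2 : y ≤ 1) :
    (y-a)^2 ≤ 2*((2-r)*y-a)^2 + 2*(r-1)^2 := by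
  nlinarith [sq_nonneg ((2-r)*y - a - (r-1)*y),
    mul_nonneg (sq_nonneg (r-1)) (by nlinarith : (0:ℝ) ≤ 1 - y^2)]

private theorem aux_hA2_lem (r : ℝ) (hr0 : 0 ≤ r) (hru : r ≤ 1.415) : (r^2-1)^2 ≤ (5.84)*(r-1)^2 := by
  nlinarith [sq_nonneg (r-1), mul_nonneg (sq_nonneg (r-1)) hr0]

private theorem aux_hA3_lem (y a : ℝ) (hy1 : 0 ≤ y) (hy2 : y ≤ 1) (haL : (0.7071:ℝ) ≤ a)
    (haU : a ≤ 0.70711) : ((y-a)*(y+a))^2 ≤ (2.92)*(y-a)^2 := by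
  have h : (y+a)^2 ≤ 2.92 := by nlinarith
  nlinarith [mul_le_mul_of_nonneg_left h (sq_nonneg (y-a))]

private theorem aux_hA4_lem (x a : ℝ) (hx1 : (0.0932:ℝ) ≤ x) (haL : (0.7071:ℝ) ≤ a) :
    (0.64)*(x-a)^2 ≤ ((x-a)*(x+a))^2 := by
  nlinarith [sq_nonneg (x-a), mul_nonneg (sq_nonneg (x-a)) (by linarith : (0:ℝ) ≤ x + a)]

private theorem aux_hAsq (A B : ℝ) : (A-B)^2 ≤ 2*A^2+2*B^2 := by nlinarith [sq_nonneg (A+B)]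

private theorem aux_hxa_lem (xa2 ya2 t2 A B : ℝ)
    (h4 : 0.64*xa2 ≤ (A - B)^2) (hA : (A-B)^2 ≤ 2*A^2+2*B^2)
    (h2 : A^2 ≤ 5.84*t2) (h3 : B^2 ≤ 2.92*ya2) :
    xa2 ≤ 19*t2 + 10*ya2 := by nlinarith

private theorem aux_hfin_lem (r D W2 t2 : ℝ) (hr0 : 0 ≤ r) (hru : r ≤ 1.415)
    (hD0 : 0 ≤ D) (hW : 0 ≤ W2) (ht : 0 ≤ t2) (hD : D ≤ 22*W2 + 41*t2) :
    (2-r)*(1/1000)*D ≤ W2 + t2*(3/2-r) := by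
  nlinarith [mul_nonneg hr0 hD0, mul_nonneg ht (by linarith : (0:ℝ) ≤ 1.415 - r)]

private theorem aux_div_step (Z r : ℝ) (h2r : 0 < 2 - r) (h : 0 ≤ (2-r)*Z) : 0 ≤ Z := by
  nlinarith [mul_pos h2r h2r]

set_option maxHeartbeats 1000000 in
private theorem aux_contrIneq (a x y r : ℝ) (ha2 : a^2 = 1/2) (ha0 : 0 < a)
    (hx1 : (0.0932:ℝ) ≤ x) (hx2 : x ≤ 1) (hy1 : 0 ≤ y) (hy2 : y ≤ 1)
    (hr2 : r^2 = x^2 + y^2) (hr0 : 0 ≤ r) :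
    r * (3/2 + y^2) ≤ (999/1000) * ((x-a)^2 + (y-a)^2) + 2*(a*x + y^2) := by
  have haL := aux_haL a ha2 ha0
  have haU := aux_haU a ha2 ha0
  have hru : r ≤ 1.415 := by nlinarith
  have hid1 : (2-r)*((r^2+1-2*a*y+2*y^2) - r*(3/2+y^2))
      = ((2-r)*y - a)^2 + (r-1)^2*(3/2-r) := by linear_combination (-1)*ha2
  have hid2 : ((x-a)^2+(y-a)^2) + 2*(a*x+y^2) = r^2+1-2*a*y+2*y^2 := by
    linear_combination (-1)*hr2 + 2*ha2
  have h1 : (x-a)*(x+a) = (r^2-1) - (y-a)*(y+a) := by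
    linear_combination (-1)*hr2 + (-2)*ha2
  have hya := aux_hya_lem a y r hy1 hy2
  have hA2 := aux_hA2_lem r hr0 hru
  have hA3 := aux_hA3_lem y a hy1 hy2 haL haU
  have hA4 : (0.64)*(x-a)^2 ≤ ((r^2-1) - (y-a)*(y+a))^2 := h1 ▸ aux_hA4_lem x a hx1 haL
  have hxa : (x-a)^2 ≤ 19*(r-1)^2 + 10*(y-a)^2 :=
    aux_hxa_lem _ _ _ _ _ hA4 (aux_hAsq _ _) hA2 hA3
  have hD : (x-a)^2 + (y-a)^2 ≤ 22*((2-r)*y-a)^2 + 41*(r-1)^2 := by linarith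
  have h2r : (0:ℝ) < 2 - r := by linarith
  have hfin0 : (2-r)*(1/1000)*((x-a)^2+(y-a)^2) ≤ ((2-r)*y-a)^2 + (r-1)^2*(3/2-r) :=
    aux_hfin_lem r _ _ _ hr0 hru (by positivity) (sq_nonneg _) (sq_nonneg _) hD
  have hfin : 0 ≤ (2-r) * ((r^2+1-2*a*y+2*y^2) - r*(3/2+y^2) - (1/1000)*((x-a)^2+(y-a)^2)) := by
    linarith [hfin0, hid1.le, hid1.ge]
  have hG := aux_div_step _ r h2r hfin
  linarith [hid2.le, hid2.ge, hG]

set_option maxHeartbeats 1000000 in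
private theorem aux_step (a bb ε x y x' y' : ℝ)
    (ha2 : a^2 = 1/2) (ha0 : 0 < a)
    (hb3 : bb^3 = 1/2) (hbl : (0.7937:ℝ) ≤ bb) (hbu : bb ≤ (0.79371:ℝ))
    (hε2 : ε^2 = (1-bb)^3) (hε0 : 0 < ε)
    (hx' : x' = x / Real.sqrt (x^2+y^2))
    (hy' : y' = a + (1 - 1/Real.sqrt (x^2+y^2))*y)
    (hK : (ε ≤ x ∧ x ≤ 1 ∧ 0 ≤ y ∧ y ≤ 1) ∨ ((0.0932:ℝ) ≤ x ∧ x ≤ ε ∧ a ≤ y ∧ y ≤ 0.716)) :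
    ((ε ≤ x' ∧ x' ≤ 1 ∧ 0 ≤ y' ∧ y' ≤ 1) ∨ ((0.0932:ℝ) ≤ x' ∧ x' ≤ ε ∧ a ≤ y' ∧ y' ≤ 0.716))
    ∧ ((x'-a)^2+(y'-a)^2) * x ≤ (999/1000) * (((x-a)^2+(y-a)^2) * x') := by
  have haL := aux_haL a ha2 ha0
  have haU := aux_haU a ha2 ha0
  have hεL2 : (0.00877:ℝ) ≤ ε^2 := by
    have h1b : (0.20629:ℝ) ≤ 1 - bb := by linarith
    have h3 := pow_le_pow_left₀ (by norm_num : (0:ℝ) ≤ 0.20629) h1b 3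
    rw [hε2]; nlinarith only [h3]
  have hεU2 : ε^2 ≤ (0.00879:ℝ) := by
    have h1b : 1 - bb ≤ (0.2063:ℝ) := by linarith
    have h3 := pow_le_pow_left₀ (by linarith : (0:ℝ) ≤ 1 - bb) h1b 3
    rw [hε2]; nlinarith only [h3]
  have hεL : (0.0936:ℝ) ≤ ε :=
    aux_sq_le_imp (by norm_num) hε0.le (by nlinarith only [hεL2])
  have hεU : ε ≤ (0.0938:ℝ) :=
    aux_sq_le_imp hε0.le (by norm_num) (by nlinarith only [hεU2])
  have hx932 : (0.0932:ℝ) ≤ x := by rcases hK with ⟨h,_,_,_⟩|⟨h,_,_,_⟩ <;> linarith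
  have hxle1 : x ≤ 1 := by rcases hK with ⟨_,h,_,_⟩|⟨_,h,_,_⟩ <;> linarith
  have hy0 : 0 ≤ y := by rcases hK with ⟨_,_,h,_⟩|⟨_,_,h,_⟩ <;> linarith
  have hyle1 : y ≤ 1 := by rcases hK with ⟨_,_,_,h⟩|⟨_,_,_,h⟩ <;> linarith
  have hxpos : (0:ℝ) < x := by linarith
  set r : ℝ := Real.sqrt (x^2+y^2) with hrdef
  have hr2 : r^2 = x^2+y^2 := Real.sq_sqrt (by positivity)
  have hr0 : 0 < r := Real.sqrt_pos.mpr (by nlinarith only [sq_nonneg y, mul_pos hxpos hxpos])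
  have hxr : x'*r = x := by rw [hx']; field_simp
  have hyr : y'*r = a*r + (r-1)*y := by rw [hy']; field_simp
  have hx2le : x^2 ≤ 1 := by nlinarith only [hxle1, hxpos]
  have hy2le : y^2 ≤ 1 := by nlinarith only [hyle1, hy0]
  have hrle : r ≤ 1.415 :=
    aux_sq_le_imp hr0.le (by norm_num) (by nlinarith only [hr2, hx2le, hy2le])
  have hxler : x ≤ r := aux_sq_le_imp hxpos.le hr0.le (by nlinarith only [hr2, sq_nonneg y])
  have hx'0 : 0 < x' := by rw [hx']; exact div_pos hxpos hr0
  have hx'le1 : x' ≤ 1 := by nlinarith only [hxr, hxler, hr0, hx'0]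
  -- contraction part
  have hG := aux_contrIneq a x y r ha2 ha0 hx932 hxle1 hy0 hyle1 hr2 hr0.le
  have hidd : ((x'-a)^2+(y'-a)^2) * r^2 = (x - a*r)^2 + ((r-1)*y)^2 := by
    have e1 : (x'-a)*r = x - a*r := by linear_combination hxr
    have e2 : (y'-a)*r = (r-1)*y := by linear_combination hyr
    linear_combination ((x'-a)*r + (x - a*r))*e1 + ((y'-a)*r + (r-1)*y)*e2
  have hid3 : (x - a*r)^2 + ((r-1)*y)^2 = r*(r*(3/2+y^2) - 2*(a*x+y^2)) := by
    linear_combination (-1)*hr2 + r^2*ha2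
  have hc1 : ((x'-a)^2+(y'-a)^2) * r^2 ≤ ((999/1000)*((x-a)^2+(y-a)^2))*r := by
    rw [hidd, hid3]
    nlinarith only [mul_le_mul_of_nonneg_left hG hr0.le]
  have hc2 : ((x'-a)^2+(y'-a)^2) * r ≤ (999/1000)*((x-a)^2+(y-a)^2) := by
    refine le_of_mul_le_mul_right ?_ hr0
    calc ((x'-a)^2+(y'-a)^2) * r * r = ((x'-a)^2+(y'-a)^2) * r^2 := by ring
      _ ≤ ((999/1000)*((x-a)^2+(y-a)^2))*r := hc1
  have hcontr : ((x'-a)^2+(y'-a)^2) * x ≤ (999/1000) * (((x-a)^2+(y-a)^2) * x') := by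
    have h3 := mul_le_mul_of_nonneg_right hc2 hx'0.le
    calc ((x'-a)^2+(y'-a)^2) * x = ((x'-a)^2+(y'-a)^2) * r * x' := by rw [← hxr]; ring
      _ ≤ (999/1000)*((x-a)^2+(y-a)^2) * x' := h3
      _ = (999/1000) * (((x-a)^2+(y-a)^2) * x') := by ring
  refine ⟨?_, hcontr⟩
  rcases hK with ⟨hx1, hx2, hy1, hy2⟩ | ⟨hx1, hx2, hy1, hy2⟩
  · have hxε2 : ε^2 ≤ x^2 := pow_le_pow_left₀ hε0.le hx1 2
    rcases le_or_gt r 1 with hr1 | hr1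
    · -- K1, r ≤ 1
      left
      have hx'x : x ≤ x' := by nlinarith only [hxr, hr1, hx'0.le, hr0]
      have hL1 := aux_L1core bb r hb3 (by linarith) (by linarith) hr0.le hr1
      have hmul : y^2*(1-r)^2 ≤ (r^2-(1-bb)^3)*(1-r)^2 := by
        apply mul_le_mul_of_nonneg_right _ (sq_nonneg (1-r))
        nlinarith only [hr2, hxε2, hε2]
      have hra2 : (r*a)^2 = r^2/2 := by rw [mul_pow, ha2]; ring
      have hy2r : ((1-r)*y)^2 ≤ (r*a)^2 := by rw [hra2]; nlinarith only [hmul, hL1]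
      have hkey : (1-r)*y ≤ r*a := by
        rcases le_or_gt ((1-r)*y) 0 with hneg | hpos
        · exact le_trans hneg (mul_pos hr0 ha0).le
        · exact aux_sq_le_imp hpos.le (mul_pos hr0 ha0).le hy2r
      have hy'0 : 0 ≤ y' := by nlinarith only [hyr, hkey, hr0]
      have hy'a : y' ≤ a := by
        nlinarith only [hyr, hr0, mul_nonneg (by linarith : (0:ℝ) ≤ 1-r) hy1]
      exact ⟨by linarith, hx'le1, hy'0, by linarith⟩
    · -- K1, r > 1
      have hra : r*a ≤ 1 := by
        refine aux_sq_le_imp (mul_pos hr0 ha0).le zero_le_one ?_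
        have hra2 : (r*a)^2 = r^2/2 := by rw [mul_pow, ha2]; ring
        rw [hra2]; nlinarith only [hr2, hx2le, hy2le]
      have hy'a : a ≤ y' := by
        nlinarith only [hyr, hr0, mul_nonneg (by linarith : (0:ℝ) ≤ r-1) hy1]
      have hy'1 : y' ≤ 1 := by
        have hm2 : (r-1)*y ≤ (r-1) := by
          nlinarith only [hy2, hr1, mul_nonneg (by linarith : (0:ℝ) ≤ r-1) (by linarith : (0:ℝ) ≤ 1-y)]
        nlinarith only [hyr, hm2, hra, hr0]
      by_cases hεx' : ε ≤ x'
      · exact Or.inl ⟨hεx', hx'le1, by linarith, hy'1⟩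
      · push_neg at hεx'
        right
        have hxr2 : x'^2*r^2 = x^2 := by linear_combination (x'*r + x)*hxr
        have h1my2 : (0:ℝ) ≤ 1 - y^2 := by linarith [hy2le]
        have h5 : x^2 ≤ x'^2*(x^2+1) := by
          nlinarith only [hxr2, hr2, mul_nonneg (sq_nonneg x') h1my2]
        have hx'sq : (0.00868624:ℝ) ≤ x'^2 := by
          nlinarith only [h5, hεL2, hxε2, hx2le, sq_nonneg x]
        have hx'932 : (0.0932:ℝ) ≤ x' :=
          aux_sq_le_imp (by norm_num) hx'0.le (by nlinarith only [hx'sq])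
        have hxlt : x < ε*r := by
          calc x = x'*r := hxr.symm
            _ < ε*r := mul_lt_mul_of_pos_right hεx' hr0
        have hx2r : x^2 ≤ ε^2*(x^2+1) := by
          nlinarith only [hxlt, hxpos, hε0, hr0, hr2, mul_nonneg (sq_nonneg ε) h1my2]
        have hx2b : x^2 ≤ (0.00887:ℝ) := by
          nlinarith only [hx2r, hεU2, sq_nonneg x]
        have hrub : r ≤ (1.00443:ℝ) :=
          aux_sq_le_imp hr0.le (by norm_num) (by nlinarith only [hr2, hx2b, hy2le])
        have hm2 : (r-1)*y ≤ (r-1) := by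
          nlinarith only [mul_nonneg (by linarith : (0:ℝ) ≤ r-1) (by linarith [hy2] : (0:ℝ) ≤ 1-y)]
        have har : a*r ≤ (0.7103:ℝ) := by
          nlinarith only [haU, hrub, ha0.le, hr0.le, mul_nonneg (by linarith : (0:ℝ) ≤ 0.70711 - a) hr0.le]
        have h6 : y'*r ≤ 0.716*r := by nlinarith only [hyr, hm2, har, hrub]
        have hy'u : y' ≤ 0.716 := by nlinarith only [h6, hr0]
        exact ⟨hx'932, hεx'.le, by linarith, hy'u⟩
  · -- K2 : to K1
    left
    have hy2a : (1:ℝ)/2 ≤ y^2 := by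
      nlinarith only [hy1, ha0.le, ha2, mul_nonneg (by linarith : (0:ℝ) ≤ y - a) (by linarith : (0:ℝ) ≤ y + a)]
    have hrl : (0.7132:ℝ) ≤ r :=
      aux_sq_le_imp (by norm_num) hr0.le (by nlinarith only [hr2, hy2a, hx932])
    have hrub : r ≤ (0.7222:ℝ) := by
      refine aux_sq_le_imp hr0.le (by norm_num) ?_
      nlinarith only [hr2, hεU2, hy1, hy2, ha0, haL,
        mul_nonneg (by linarith : (0:ℝ) ≤ ε - x) (by linarith [hεL] : (0:ℝ) ≤ ε + x),
        mul_nonneg (by linarith : (0:ℝ) ≤ 0.716 - y) (by linarith : (0:ℝ) ≤ 0.716 + y)]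
    have hx'ε : ε ≤ x' := by
      nlinarith only [hxr, hx932, hrub, hx'0.le, hεU, mul_nonneg hx'0.le (by linarith : (0:ℝ) ≤ 0.7222 - r)]
    have h7 : 0 ≤ y'*r := by
      nlinarith only [hyr, haL, hrl, hy2, hy1, ha0.le, hr0.le,
        mul_nonneg (by linarith : (0:ℝ) ≤ 1 - r) (by linarith : (0:ℝ) ≤ 0.716 - y),
        mul_nonneg (by linarith : (0:ℝ) ≤ a - 0.7071) hr0.le]
    have hy'0 : 0 ≤ y' := by nlinarith only [h7, hr0]
    have hy'a : y' ≤ a := by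
      nlinarith only [hyr, hr0, mul_nonneg (by linarith : (0:ℝ) ≤ 1-r) (by linarith : (0:ℝ) ≤ y)]
    exact ⟨hx'ε, hx'le1, hy'0, by linarith⟩

set_option maxHeartbeats 1000000 in
/-- Main theorem: for the DR recursion with α = 1/√2, if
(x₀,y₀) ∈ [ε,1] × [0,1] with ε = (1 − 2^{−1/3})^{3/2}, then (xₙ,yₙ) → (α,α). -/
theorem stmt19 (x y : ℕ → ℝ)
    (hrec : ∀ n, x (n + 1) = x n / Real.sqrt (x n ^ 2 + y n ^ 2) ∧
      y (n + 1) = 1 / Real.sqrt 2 + (1 - 1 / Real.sqrt (x n ^ 2 + y n ^ 2)) * y n)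
    (hx0 : x 0 ∈ Set.Icc (((1:ℝ) - 2 ^ (-(1:ℝ)/3)) ^ ((3:ℝ)/2)) 1)
    (hy0 : y 0 ∈ Set.Icc (0:ℝ) 1) :
    Filter.Tendsto (fun n => (x n, y n)) Filter.atTop
      (nhds (1 / Real.sqrt 2, 1 / Real.sqrt 2)) := by
  set a : ℝ := 1 / Real.sqrt 2 with ha_def
  set bb : ℝ := (2:ℝ) ^ (-(1:ℝ)/3) with hbb_def
  set ε : ℝ := ((1:ℝ) - (2:ℝ) ^ (-(1:ℝ)/3)) ^ ((3:ℝ)/2) with hε_def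
  have hs2 : Real.sqrt 2 ^ 2 = 2 := Real.sq_sqrt (by norm_num)
  have hs2pos : 0 < Real.sqrt 2 := Real.sqrt_pos.mpr (by norm_num)
  have ha2 : a^2 = 1/2 := by rw [ha_def, div_pow, one_pow, hs2]
  have ha0 : 0 < a := by rw [ha_def]; positivity
  have hb0 : 0 < bb := Real.rpow_pos_of_pos (by norm_num) _
  have hb1 : bb < 1 := Real.rpow_lt_one_of_one_lt_of_neg (by norm_num) (by norm_num)
  have hb3 : bb^3 = 1/2 := by
    rw [hbb_def, ← Real.rpow_natCast ((2:ℝ) ^ (-(1:ℝ)/3)) 3,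
      ← Real.rpow_mul (by norm_num : (0:ℝ) ≤ 2)]
    norm_num
  have hbl : (0.7937:ℝ) ≤ bb := by
    nlinarith [hb0, hb3, sq_nonneg (bb - 0.7937), sq_nonneg (bb + 0.7937)]
  have hbu : bb ≤ (0.79371:ℝ) := by
    nlinarith [hb0, hb3, sq_nonneg (bb - 0.79371), sq_nonneg (bb + 0.79371)]
  have hε2 : ε^2 = (1-bb)^3 := by
    rw [hε_def, ← Real.rpow_natCast (((1:ℝ) - (2:ℝ) ^ (-(1:ℝ)/3)) ^ ((3:ℝ)/2)) 2,
      ← Real.rpow_mul (by linarith : (0:ℝ) ≤ 1 - (2:ℝ) ^ (-(1:ℝ)/3))]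
    norm_num
    rw [← Real.rpow_natCast ((1:ℝ) - (2:ℝ) ^ (-(1:ℝ)/3)) 3]
    norm_num
  have hε0 : 0 < ε := Real.rpow_pos_of_pos (by linarith) _
  have hεL2 : (0.00877:ℝ) ≤ ε^2 := by
    have h1b : (0.20629:ℝ) ≤ 1 - bb := by linarith
    have h3 := pow_le_pow_left₀ (by norm_num : (0:ℝ) ≤ 0.20629) h1b 3
    rw [hε2]; nlinarith only [h3]
  have hεU2 : ε^2 ≤ (0.00879:ℝ) := by
    have h1b : 1 - bb ≤ (0.2063:ℝ) := by linarith
    have h3 := pow_le_pow_left₀ (by linarith : (0:ℝ) ≤ 1 - bb) h1b 3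
    rw [hε2]; nlinarith only [h3]
  have hεL : (0.0932:ℝ) ≤ ε := by nlinarith only [hεL2, hε0]
  have hεU : ε ≤ (0.0938:ℝ) := by nlinarith only [hεU2, hε0]
  have haL := aux_haL a ha2 ha0
  have haU := aux_haU a ha2 ha0
  have main : ∀ n, ((ε ≤ x n ∧ x n ≤ 1 ∧ 0 ≤ y n ∧ y n ≤ 1) ∨
      ((0.0932:ℝ) ≤ x n ∧ x n ≤ ε ∧ a ≤ y n ∧ y n ≤ 0.716)) ∧
      ((x n - a)^2 + (y n - a)^2) * x 0 ≤
        (999/1000)^n * (((x 0 - a)^2 + (y 0 - a)^2) * x n) := by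
    intro n
    induction n with
    | zero =>
      exact ⟨Or.inl ⟨hx0.1, hx0.2, hy0.1, hy0.2⟩, by rw [pow_zero, one_mul]⟩
    | succ n ih =>
      obtain ⟨hKn, hVn⟩ := ih
      obtain ⟨hKn1, hstep⟩ := aux_step a bb ε (x n) (y n) (x (n+1)) (y (n+1))
        ha2 ha0 hb3 hbl hbu hε2 hε0 (hrec n).1 (hrec n).2 hKn
      refine ⟨hKn1, ?_⟩
      have hxn : (0.0932:ℝ) ≤ x n := by rcases hKn with ⟨h,_,_,_⟩|⟨h,_,_,_⟩ <;> linarith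
      have hxn1 : (0.0932:ℝ) ≤ x (n+1) := by rcases hKn1 with ⟨h,_,_,_⟩|⟨h,_,_,_⟩ <;> linarith
      have hx00 : (0.0932:ℝ) ≤ x 0 := by linarith [hx0.1]
      have h1 := mul_le_mul_of_nonneg_right hstep (by linarith : (0:ℝ) ≤ x 0)
      have h2 := mul_le_mul_of_nonneg_right hVn
        (by positivity : (0:ℝ) ≤ (999/1000:ℝ) * x (n+1))
      rw [pow_succ]
      have key : (((x (n+1) - a)^2 + (y (n+1) - a)^2) * x 0) * x n ≤
          (((999/1000:ℝ)^n * (999/1000)) * (((x 0 - a)^2 + (y 0 - a)^2) * x (n+1))) * x n := by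
        nlinarith only [h1, h2]
      exact le_of_mul_le_mul_right key (by linarith : (0:ℝ) < x n)
  have hd20 : ((x 0 - a)^2 + (y 0 - a)^2) ≤ 2 := by
    have h1 := hx0.1; have h2 := hx0.2; have h3 := hy0.1; have h4 := hy0.2
    nlinarith only [h1, h2, h3, h4, haL, haU, hεL]
  have hd2 : ∀ n, (x n - a)^2 + (y n - a)^2 ≤ 22*(999/1000)^n := by
    intro n
    obtain ⟨hKn, hVn⟩ := main n
    have hxn : (0.0932:ℝ) ≤ x n := by rcases hKn with ⟨h,_,_,_⟩|⟨h,_,_,_⟩ <;> linarith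
    have hxn1 : x n ≤ 1 := by rcases hKn with ⟨_,h,_,_⟩|⟨_,h,_,_⟩ <;> linarith
    have hx00 : (0.0932:ℝ) ≤ x 0 := by linarith [hx0.1]
    have hcn : (0:ℝ) ≤ (999/1000:ℝ)^n := by positivity
    have hd2x : ((x 0 - a)^2 + (y 0 - a)^2) * x n ≤ 2 := by
      nlinarith only [hd20, hxn1, hxn, add_nonneg (sq_nonneg (x 0 - a)) (sq_nonneg (y 0 - a))]
    have h5 : (999/1000:ℝ)^n * (((x 0 - a)^2 + (y 0 - a)^2) * x n) ≤ (999/1000:ℝ)^n * 2 :=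
      mul_le_mul_of_nonneg_left hd2x hcn
    nlinarith only [hVn, h5, hcn, hx00,
      mul_nonneg (add_nonneg (sq_nonneg (x n - a)) (sq_nonneg (y n - a))) (by linarith : (0:ℝ) ≤ x 0 - 0.0932)]
  have hgeo : Filter.Tendsto (fun n => (22:ℝ)*(999/1000)^n) Filter.atTop (nhds 0) := by
    have h := tendsto_pow_atTop_nhds_zero_of_lt_one (by norm_num : (0:ℝ) ≤ 999/1000)
      (by norm_num : (999/1000:ℝ) < 1)
    simpa using h.const_mul (22:ℝ)
  have hsq : Filter.Tendsto (fun n => Real.sqrt ((22:ℝ)*(999/1000)^n)) Filter.atTop (nhds 0) := by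
    have h := (Real.continuous_sqrt.tendsto' 0 0 Real.sqrt_zero).comp hgeo
    exact h
  have hx_t : Filter.Tendsto x Filter.atTop (nhds a) := by
    rw [tendsto_iff_dist_tendsto_zero]
    refine squeeze_zero (fun n => dist_nonneg) (fun n => ?_) hsq
    rw [Real.dist_eq, ← Real.sqrt_sq_eq_abs]
    exact Real.sqrt_le_sqrt (by nlinarith only [hd2 n, sq_nonneg (y n - a)])
  have hy_t : Filter.Tendsto y Filter.atTop (nhds a) := by
    rw [tendsto_iff_dist_tendsto_zero]
    refine squeeze_zero (fun n => dist_nonneg) (fun n => ?_) hsq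
    rw [Real.dist_eq, ← Real.sqrt_sq_eq_abs]
    exact Real.sqrt_le_sqrt (by nlinarith only [hd2 n, sq_nonneg (x n - a)])
  exact hx_t.prodMk_nhds hy_t
end
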